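/- arXiv:2210.01793 — 3 statements merged into one kernel-verified Lean document; each statement's English description precedes it below -/
import Mathlib

section
/- For all integers k ≥ 3 and n ≥ 2, and any two distinct indices i, j with 1 ≤ i, j ≤ n, the class of the divisor η_{i,j} in the critical group K(H_{k,n}) has additive order exactly k−1. -/
/-- Vertex set of the hinge graph `H_{k,n}`: two shared vertices `u, w`
(encoded as `Sum.inl 0`, `Sum.inl 1`) together with the vertices
`v_{i,j}` (encoded as `Sum.inr (i, j)`, zero-indexed). -/
abbrev HingeVertex (k n : ℕ) : Type := Fin 2 ⊕ (Fin n × Fin (k - 2))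

/-- The shared vertex `u`. -/
def hu (k n : ℕ) : HingeVertex k n := Sum.inl 0

/-- The shared vertex `w`. -/
def hw (k n : ℕ) : HingeVertex k n := Sum.inl 1

/-- The vertex `v_{i+1,j+1}` of the `i+1`-st cycle (zero-indexed here). -/
def hv (k n : ℕ) (i : Fin n) (j : Fin (k - 2)) : HingeVertex k n := Sum.inr (i, j)

/-- The base (Boolean) edge relation of the hinge graph: `u-w`, `u-v_{i,1}`,
`v_{i,j}-v_{i,j+1}`, `v_{i,k-2}-w`. -/
def hingeRelB (k n : ℕ) : HingeVertex k n → HingeVertex k n → Bool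
  | Sum.inl a, Sum.inl b => a != b
  | Sum.inl a, Sum.inr p => a == 0 && p.2.val == 0
  | Sum.inr p, Sum.inl b => b == 1 && p.2.val == k - 3
  | Sum.inr p, Sum.inr q => p.1 == q.1 && q.2.val == p.2.val + 1

/-- The hinge graph `H_{k,n}`: `n` cycles of length `k` glued along the edge `{u, w}`. -/
def Hinge (k n : ℕ) : SimpleGraph (HingeVertex k n) :=
  SimpleGraph.fromRel (fun x y => hingeRelB k n x y = true)

instance (k n : ℕ) : DecidableRel (Hinge k n).Adj := fun x y =>
  inferInstanceAs (Decidable (x ≠ y ∧ (hingeRelB k n x y = true ∨ hingeRelB k n y x = true)))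

/-- The number of spanning trees of a graph `G`: the number of edge sets `s ⊆ E(G)`
whose associated spanning subgraph (on all of `V`) is connected and acyclic. -/
noncomputable def spanningTreeCount {V : Type*} (G : SimpleGraph V) : ℕ :=
  Set.ncard {s : Set (Sym2 V) | s ⊆ G.edgeSet ∧ (SimpleGraph.fromEdgeSet s).IsTree}

/-- The degree homomorphism on divisors. -/
def degHom (V : Type*) [Fintype V] : (V → ℤ) →+ ℤ where
  toFun D := ∑ v, D v
  map_zero' := by simp
  map_add' x y := by simp [Finset.sum_add_distrib]

/-- The group `Div⁰` of degree-zero divisors. -/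
def Div0 (V : Type*) [Fintype V] : AddSubgroup (V → ℤ) := (degHom V).ker

/-- The group of principal divisors: the image of the Laplacian `L = Deg - A`. -/
def Prin {V : Type*} [Fintype V] [DecidableEq V] (G : SimpleGraph V) [DecidableRel G.Adj] :
    AddSubgroup (V → ℤ) :=
  AddMonoidHom.range (Matrix.mulVecLin (G.lapMatrix ℤ)).toAddMonoidHom

/-- The critical group `K(G) = Div⁰(G) / Prin(G)`. -/
def CriticalGroup {V : Type*} [Fintype V] [DecidableEq V] (G : SimpleGraph V)
    [DecidableRel G.Adj] : Type _ :=
  Div0 V ⧸ ((Prin G).addSubgroupOf (Div0 V))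

noncomputable instance {V : Type*} [Fintype V] [DecidableEq V] (G : SimpleGraph V)
    [DecidableRel G.Adj] : AddCommGroup (CriticalGroup G) :=
  inferInstanceAs (AddCommGroup (Div0 V ⧸ ((Prin G).addSubgroupOf (Div0 V))))

/-- The class of a degree-zero divisor in the critical group. -/
def divisorClass {V : Type*} [Fintype V] [DecidableEq V] (G : SimpleGraph V)
    [DecidableRel G.Adj] (D : V → ℤ) (hD : D ∈ Div0 V) : CriticalGroup G :=
  (QuotientAddGroup.mk (⟨D, hD⟩ : Div0 V) :
    Div0 V ⧸ ((Prin G).addSubgroupOf (Div0 V)))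

/-- The divisor with value `1` at `x`, `-1` at `y` (for `x ≠ y`) and `0` elsewhere. -/
def pointDiff {V : Type*} [DecidableEq V] (x y : V) : V → ℤ :=
  fun z => (if z = x then 1 else 0) - (if z = y then 1 else 0)

lemma pointDiff_mem {V : Type*} [Fintype V] [DecidableEq V] (x y : V) :
    pointDiff x y ∈ Div0 V := by
  simp [Div0, AddMonoidHom.mem_ker, degHom, pointDiff, Finset.sum_sub_distrib]

set_option maxHeartbeats 1600000

section HingeProofAux

open Finset

variable {k n : ℕ}

lemma adj_inl_inl (a b : Fin 2) : (Hinge k n).Adj (.inl a) (.inl b) ↔ a ≠ b := by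
  simp only [Hinge, SimpleGraph.fromRel_adj, hingeRelB, bne_iff_ne, ne_eq, Sum.inl.injEq]
  tauto

lemma adj_u_inr (p : Fin n × Fin (k - 2)) :
    (Hinge k n).Adj (.inl 0) (.inr p) ↔ p.2.val = 0 := by
  simp [Hinge, SimpleGraph.fromRel_adj, hingeRelB]

lemma adj_w_inr (p : Fin n × Fin (k - 2)) :
    (Hinge k n).Adj (.inl 1) (.inr p) ↔ p.2.val = k - 3 := by
  simp [Hinge, SimpleGraph.fromRel_adj, hingeRelB]

lemma adj_inr_inr (p q : Fin n × Fin (k - 2)) :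
    (Hinge k n).Adj (.inr p) (.inr q) ↔
      p.1 = q.1 ∧ (q.2.val = p.2.val + 1 ∨ p.2.val = q.2.val + 1) := by
  simp only [Hinge, SimpleGraph.fromRel_adj, hingeRelB, Bool.and_eq_true, beq_iff_eq, ne_eq,
    Sum.inr.injEq]
  constructor
  · rintro ⟨hne, h | h⟩
    · exact ⟨h.1, Or.inl h.2⟩
    · exact ⟨h.1.symm, Or.inr h.2⟩
  · rintro ⟨h1, h2⟩
    refine ⟨?_, ?_⟩
    · intro he
      rw [he] at h2
      omega
    · rcases h2 with h | h
      · exact Or.inl ⟨h1, h⟩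
      · exact Or.inr ⟨h1.symm, h⟩

lemma lap_row {V : Type*} [Fintype V] [DecidableEq V] (G : SimpleGraph V)
    [DecidableRel G.Adj] (g : V → ℤ) (x : V) :
    (G.lapMatrix ℤ).mulVec g x = ∑ y, if G.Adj x y then g x - g y else 0 := by
  rw [SimpleGraph.lapMatrix_mulVec_apply, SimpleGraph.degree_eq_sum_if_adj,
    Finset.sum_mul, SimpleGraph.neighborFinset_eq_filter, Finset.sum_filter,
    ← Finset.sum_sub_distrib]
  refine Finset.sum_congr rfl fun y _ => ?_
  by_cases h : G.Adj x y <;> simp [h]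

lemma sum_ite_val {c : ℕ} (a : ℕ) (f : Fin c → ℤ) :
    (∑ t : Fin c, if t.val = a then f t else 0) = if h : a < c then f ⟨a, h⟩ else 0 := by
  split
  · next h =>
    rw [Finset.sum_eq_single (⟨a, h⟩ : Fin c)]
    · simp
    · intro t _ ht
      have : t.val ≠ a := fun hh => ht (Fin.ext hh)
      simp [this]
    · simp
  · next h =>
    refine Finset.sum_eq_zero fun t _ => ?_
    have := t.isLt
    have : t.val ≠ a := by omega
    simp [this]

lemma ite_or_split (P Q : Prop) [Decidable P] [Decidable Q] (h : ¬(P ∧ Q)) (x : ℤ) :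
    (if P ∨ Q then x else 0) = (if P then x else 0) + (if Q then x else 0) := by
  by_cases hP : P <;> by_cases hQ : Q <;> simp [hP, hQ] <;> tauto

lemma sum_pair {n : ℕ} {i j : Fin n} (hij : i ≠ j) (a b : ℤ) :
    ∑ l : Fin n, (if l = i then a else if l = j then b else 0) = a + b := by
  have h : ∀ l : Fin n, (if l = i then a else if l = j then b else 0) =
      (if l = i then a else 0) + (if l = j then b else 0) := by
    intro l
    by_cases h1 : l = i <;> by_cases h2 : l = j
    · exact absurd (h1 ▸ h2) hij
    · subst h1; simp [hij, Ne.symm]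
    · subst h2; have : ¬ (l = i) := fun h => hij h.symm; simp [this]
    · simp [h1, h2]
  simp [h, Finset.sum_add_distrib]

lemma row_u (hk : 3 ≤ k) (g : HingeVertex k n → ℤ) :
    ((Hinge k n).lapMatrix ℤ).mulVec g (Sum.inl 0) =
      (g (Sum.inl 0) - g (Sum.inl 1)) +
      ∑ l : Fin n, (g (Sum.inl 0) - g (Sum.inr (l, ⟨0, by omega⟩))) := by
  rw [lap_row, Fintype.sum_sum_type, Fin.sum_univ_two]
  have h0 : ¬ (Hinge k n).Adj (Sum.inl 0) (Sum.inl 0) := (Hinge k n).irrefl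
  have h1 : (Hinge k n).Adj (Sum.inl 0) (Sum.inl 1) := by
    rw [adj_inl_inl]; decide
  rw [if_neg h0, if_pos h1]
  have h2 : ∀ p : Fin n × Fin (k-2), (if (Hinge k n).Adj (Sum.inl 0) (Sum.inr p)
      then g (Sum.inl 0) - g (Sum.inr p) else 0)
      = (if p.2.val = 0 then g (Sum.inl 0) - g (Sum.inr p) else 0) := by
    intro p; exact if_congr (adj_u_inr p) rfl rfl
  simp_rw [h2]
  rw [Fintype.sum_prod_type]
  have h3 : ∀ l : Fin n, (∑ t : Fin (k-2), if t.val = 0 then g (Sum.inl 0) - g (Sum.inr (l, t)) else 0)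
      = g (Sum.inl 0) - g (Sum.inr (l, ⟨0, by omega⟩)) := by
    intro l
    rw [sum_ite_val 0 (fun t => g (Sum.inl 0) - g (Sum.inr (l, t)))]
    rw [dif_pos (by omega)]
  simp_rw [h3]
  ring

lemma row_w (hk : 3 ≤ k) (g : HingeVertex k n → ℤ) :
    ((Hinge k n).lapMatrix ℤ).mulVec g (Sum.inl 1) =
      (g (Sum.inl 1) - g (Sum.inl 0)) +
      ∑ l : Fin n, (g (Sum.inl 1) - g (Sum.inr (l, ⟨k - 3, by omega⟩))) := by
  rw [lap_row, Fintype.sum_sum_type, Fin.sum_univ_two]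
  have h0 : ¬ (Hinge k n).Adj (Sum.inl 1) (Sum.inl 1) := (Hinge k n).irrefl
  have h1 : (Hinge k n).Adj (Sum.inl 1) (Sum.inl 0) := by
    rw [adj_inl_inl]; decide
  rw [if_neg h0, if_pos h1]
  have h2 : ∀ p : Fin n × Fin (k-2), (if (Hinge k n).Adj (Sum.inl 1) (Sum.inr p)
      then g (Sum.inl 1) - g (Sum.inr p) else 0)
      = (if p.2.val = k - 3 then g (Sum.inl 1) - g (Sum.inr p) else 0) := by
    intro p; exact if_congr (adj_w_inr p) rfl rfl
  simp_rw [h2]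
  rw [Fintype.sum_prod_type]
  have h3 : ∀ l : Fin n, (∑ t : Fin (k-2), if t.val = k-3 then g (Sum.inl 1) - g (Sum.inr (l, t)) else 0)
      = g (Sum.inl 1) - g (Sum.inr (l, ⟨k-3, by omega⟩)) := by
    intro l
    rw [sum_ite_val (k-3) (fun t => g (Sum.inl 1) - g (Sum.inr (l, t)))]
    rw [dif_pos (by omega)]
  simp_rw [h3]
  ring

lemma row_v (hk : 3 ≤ k) (g : HingeVertex k n → ℤ) (l : Fin n) (t : Fin (k - 2)) :
    ((Hinge k n).lapMatrix ℤ).mulVec g (Sum.inr (l, t)) =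
      (if t.val = 0 then g (Sum.inr (l,t)) - g (Sum.inl 0) else 0)
    + (if t.val = k - 3 then g (Sum.inr (l,t)) - g (Sum.inl 1) else 0)
    + (if h : t.val + 1 < k - 2 then g (Sum.inr (l,t)) - g (Sum.inr (l, ⟨t.val+1, h⟩)) else 0)
    + (if h : 0 < t.val then g (Sum.inr (l,t)) - g (Sum.inr (l, ⟨t.val-1,
        lt_of_le_of_lt (Nat.sub_le _ _) t.isLt⟩)) else 0) := by
  rw [lap_row, Fintype.sum_sum_type, Fin.sum_univ_two]
  have e0 : (if (Hinge k n).Adj (Sum.inr (l,t)) (Sum.inl 0)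
      then g (Sum.inr (l,t)) - g (Sum.inl 0) else 0)
      = (if t.val = 0 then g (Sum.inr (l,t)) - g (Sum.inl 0) else 0) :=
    if_congr (by rw [SimpleGraph.adj_comm]; exact adj_u_inr _) rfl rfl
  have e1 : (if (Hinge k n).Adj (Sum.inr (l,t)) (Sum.inl 1)
      then g (Sum.inr (l,t)) - g (Sum.inl 1) else 0)
      = (if t.val = k - 3 then g (Sum.inr (l,t)) - g (Sum.inl 1) else 0) :=
    if_congr (by rw [SimpleGraph.adj_comm]; exact adj_w_inr _) rfl rfl
  rw [e0, e1]
  have e2 : ∀ q : Fin n × Fin (k-2), (if (Hinge k n).Adj (Sum.inr (l,t)) (Sum.inr q)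
      then g (Sum.inr (l,t)) - g (Sum.inr q) else 0)
      = (if l = q.1 ∧ (q.2.val = t.val + 1 ∨ t.val = q.2.val + 1)
          then g (Sum.inr (l,t)) - g (Sum.inr q) else 0) :=
    fun q => if_congr (adj_inr_inr _ _) rfl rfl
  rw [Finset.sum_congr rfl (fun q _ => e2 q), Fintype.sum_prod_type]
  rw [Finset.sum_eq_single l (fun l' _ hl' => Finset.sum_eq_zero (fun t' _ => by
        simp [Ne.symm hl'])) (by simp)]
  have e3 : ∀ t' : Fin (k-2), (if l = l ∧ (t'.val = t.val + 1 ∨ t.val = t'.val + 1)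
        then g (Sum.inr (l,t)) - g (Sum.inr (l, t')) else 0)
      = (if t'.val = t.val + 1 then g (Sum.inr (l,t)) - g (Sum.inr (l, t')) else 0)
      + (if t.val = t'.val + 1 then g (Sum.inr (l,t)) - g (Sum.inr (l, t')) else 0) := by
    intro t'
    rw [if_congr (show (l = l ∧ (t'.val = t.val + 1 ∨ t.val = t'.val + 1)) ↔
        (t'.val = t.val + 1 ∨ t.val = t'.val + 1) by simp) rfl rfl]
    exact ite_or_split _ _ (by omega) _
  rw [Finset.sum_congr rfl (fun t' _ => e3 t'), Finset.sum_add_distrib,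
    sum_ite_val (t.val + 1) (fun t' => g (Sum.inr (l,t)) - g (Sum.inr (l, t')))]
  by_cases ht : 0 < t.val
  · have e4 : ∀ t' : Fin (k-2), (if t.val = t'.val + 1
        then g (Sum.inr (l,t)) - g (Sum.inr (l, t')) else 0)
        = (if t'.val = t.val - 1 then g (Sum.inr (l,t)) - g (Sum.inr (l, t')) else 0) :=
      fun t' => if_congr (by omega) rfl rfl
    rw [Finset.sum_congr rfl (fun t' _ => e4 t'),
      sum_ite_val (t.val - 1) (fun t' => g (Sum.inr (l,t)) - g (Sum.inr (l, t'))),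
      dif_pos (show t.val - 1 < k - 2 from lt_of_le_of_lt (Nat.sub_le _ _) t.isLt),
      dif_pos ht]
    ring
  · rw [Finset.sum_eq_zero (fun t' _ => by
      have : ¬ (t.val = t'.val + 1) := by omega
      simp [this]), dif_neg ht]
    ring

def gwit (k n : ℕ) (i j : Fin n) : HingeVertex k n → ℤ :=
  fun x => match x with
  | Sum.inl _ => 0
  | Sum.inr (l, t) => (if l = i then 1 else if l = j then -1 else 0) * ((k:ℤ) - 2 - t.val)

lemma partA (hk : 3 ≤ k) {i j : Fin n} (hij : i ≠ j) (h2 : 0 < k - 2) :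
    ((Hinge k n).lapMatrix ℤ).mulVec (gwit k n i j) =
      fun x => ((k:ℤ) - 1) * pointDiff (hv k n i ⟨0, h2⟩) (hv k n j ⟨0, h2⟩) x := by
  funext x
  rcases x with a | ⟨l, t⟩
  · have hpd : pointDiff (hv k n i ⟨0, h2⟩) (hv k n j ⟨0, h2⟩) (Sum.inl a) = 0 := by
      simp [pointDiff, hv]
    rw [hpd, mul_zero]
    fin_cases a
    · show (SimpleGraph.lapMatrix ℤ (Hinge k n)).mulVec (gwit k n i j) (Sum.inl 0) = 0
      rw [row_u hk]
      have e : ∀ l : Fin n, gwit k n i j (Sum.inl 0) - gwit k n i j (Sum.inr (l, ⟨0, by omega⟩))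
          = (if l = i then -((k:ℤ)-2) else if l = j then (k:ℤ)-2 else 0) := by
        intro l
        by_cases h1 : l = i <;> by_cases hjj : l = j <;> simp [gwit, h1, hjj, Ne.symm hij] <;> ring
      rw [Finset.sum_congr rfl (fun l _ => e l), sum_pair hij]
      simp [gwit]
    · show (SimpleGraph.lapMatrix ℤ (Hinge k n)).mulVec (gwit k n i j) (Sum.inl 1) = 0
      rw [row_w hk]
      have e : ∀ l : Fin n, gwit k n i j (Sum.inl 1) - gwit k n i j (Sum.inr (l, ⟨k-3, by omega⟩))
          = (if l = i then -((k:ℤ)-2-((k-3:ℕ):ℤ)) else if l = j then (k:ℤ)-2-((k-3:ℕ):ℤ) else 0) := by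
        intro l
        by_cases h1 : l = i <;> by_cases hjj : l = j <;> simp [gwit, h1, hjj, Ne.symm hij] <;> ring
      rw [Finset.sum_congr rfl (fun l _ => e l), sum_pair hij]
      simp [gwit]
  · rw [row_v hk]
    have hlt := t.isLt
    have hpd : pointDiff (hv k n i ⟨0, h2⟩) (hv k n j ⟨0, h2⟩) (Sum.inr (l,t))
        = (if l = i ∧ t.val = 0 then 1 else 0) - (if l = j ∧ t.val = 0 then 1 else 0) := by
      simp [pointDiff, hv, Prod.ext_iff, Fin.ext_iff]
    rw [hpd]
    by_cases h1 : l = i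
    · subst h1
      have hnj : l ≠ j := hij
      simp only [gwit, if_pos rfl, hnj, true_and, false_and, if_false]
      split_ifs <;> push_cast [*] <;> ring_nf <;> omega
    · by_cases hjj : l = j
      · subst hjj
        have hni : l ≠ i := fun h => absurd h.symm hij
        simp only [gwit, if_neg hni, if_pos rfl, hni, true_and, false_and, if_false]
        split_ifs <;> push_cast [*] <;> ring_nf <;> omega
      · simp only [gwit, if_neg h1, if_neg hjj, h1, hjj, false_and, if_false]
        split_ifs <;> ring

lemma row_v' (hk : 3 ≤ k) (g : HingeVertex k n → ℤ) (l : Fin n) (t : ℕ) (ht : t < k - 2) :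
    ((Hinge k n).lapMatrix ℤ).mulVec g (Sum.inr (l, ⟨t, ht⟩)) =
      (if t = 0 then g (Sum.inr (l,⟨t,ht⟩)) - g (Sum.inl 0) else 0)
    + (if t = k - 3 then g (Sum.inr (l,⟨t,ht⟩)) - g (Sum.inl 1) else 0)
    + (if h : t + 1 < k - 2 then g (Sum.inr (l,⟨t,ht⟩)) - g (Sum.inr (l, ⟨t+1, h⟩)) else 0)
    + (if h : 0 < t then g (Sum.inr (l,⟨t,ht⟩)) - g (Sum.inr (l, ⟨t-1,
        lt_of_le_of_lt (Nat.sub_le _ _) ht⟩)) else 0) :=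
  row_v hk g l ⟨t, ht⟩

lemma partB (hk : 3 ≤ k) (hn : 2 ≤ n) {i j : Fin n} (hij : i ≠ j) (h2 : 0 < k - 2)
    (m : ℤ) (g : HingeVertex k n → ℤ)
    (hg : ((Hinge k n).lapMatrix ℤ).mulVec g =
      fun x => m * pointDiff (hv k n i ⟨0, h2⟩) (hv k n j ⟨0, h2⟩) x) :
    ((k:ℤ) - 1) ∣ m := by
  set α := g (Sum.inl 0) with hα
  set β := g (Sum.inl 1) with hβ
  set s : Fin n → ℤ := fun l => g (Sum.inr (l, ⟨0, h2⟩)) - α with hs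
  set mv : Fin n → ℤ := fun l => if l = i then m else if l = j then -m else 0 with hmv
  -- the value of the RHS at a chain vertex
  have hrhs : ∀ (l : Fin n) (t : ℕ) (ht : t < k - 2),
      m * pointDiff (hv k n i ⟨0, h2⟩) (hv k n j ⟨0, h2⟩) (Sum.inr (l, ⟨t, ht⟩))
        = (if t = 0 then mv l else 0) := by
    intro l t ht
    have hcond1 : (Sum.inr (l, ⟨t, ht⟩) : HingeVertex k n) = hv k n i ⟨0, h2⟩ ↔ l = i ∧ t = 0 := by
      simp [hv, Prod.ext_iff, Fin.ext_iff]
    have hcond2 : (Sum.inr (l, ⟨t, ht⟩) : HingeVertex k n) = hv k n j ⟨0, h2⟩ ↔ l = j ∧ t = 0 := by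
      simp [hv, Prod.ext_iff, Fin.ext_iff]
    have e1 : (if (Sum.inr (l,⟨t,ht⟩) : HingeVertex k n) = hv k n i ⟨0,h2⟩ then (1:ℤ) else 0)
        = (if l = i ∧ t = 0 then 1 else 0) := if_congr hcond1 rfl rfl
    have e2 : (if (Sum.inr (l,⟨t,ht⟩) : HingeVertex k n) = hv k n j ⟨0,h2⟩ then (1:ℤ) else 0)
        = (if l = j ∧ t = 0 then 1 else 0) := if_congr hcond2 rfl rfl
    simp only [pointDiff]
    rw [e1, e2]
    by_cases ht0 : t = 0 <;> by_cases hli : l = i <;> by_cases hlj : l = j <;>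
      first
      | (exact absurd (hli ▸ hlj : i = j)  hij)
      | simp [hmv, show ¬ (j = i) from fun hh => hij hh.symm, *]
  -- row equations at chain vertices
  have hval : ∀ (l : Fin n) (t : ℕ) (ht : t < k - 2),
      (if t = 0 then g (Sum.inr (l,⟨t,ht⟩)) - α else 0)
    + (if t = k - 3 then g (Sum.inr (l,⟨t,ht⟩)) - β else 0)
    + (if h : t + 1 < k - 2 then g (Sum.inr (l,⟨t,ht⟩)) - g (Sum.inr (l, ⟨t+1, h⟩)) else 0)
    + (if h : 0 < t then g (Sum.inr (l,⟨t,ht⟩)) - g (Sum.inr (l, ⟨t-1,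
        lt_of_le_of_lt (Nat.sub_le _ _) ht⟩)) else 0)
      = (if t = 0 then mv l else 0) := by
    intro l t ht
    have h1 := congrFun hg (Sum.inr (l, ⟨t, ht⟩))
    rw [row_v' hk g l t ht] at h1
    rw [h1, hrhs l t ht]
  -- values along the chains
  have hchain : ∀ (l : Fin n) (t : ℕ) (h : t < k - 2),
      g (Sum.inr (l, ⟨t, h⟩)) = α + ((t:ℤ) + 1) * s l - (t:ℤ) * mv l := by
    intro l t
    induction t using Nat.strong_induction_on with
    | _ t IH =>
      intro h
      cases t with
      | zero => simp [hs]
      | succ u =>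
        have hu : u < k - 2 := by omega
        have hru := hval l u hu
        rcases Nat.eq_zero_or_pos u with h0 | h0
        · subst h0
          have c1 : (0:ℕ) ≠ k - 3 := by omega
          have c2 : (0:ℕ) + 1 < k - 2 := h
          rw [if_pos rfl, if_neg c1, dif_pos c2, dif_neg (lt_irrefl 0), if_pos rfl] at hru
          have hg0 := IH 0 (by omega) hu
          have huu : g (Sum.inr (l, ⟨0 + 1, c2⟩)) = g (Sum.inr (l, ⟨0 + 1, h⟩)) := rfl
          rw [huu, hg0] at hru
          norm_num at hru ⊢
          linarith
        · rw [if_neg (by omega), if_neg (by omega), dif_pos (by omega)] at hru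
          rw [dif_pos h0] at hru
          have hgu := IH u (by omega) hu
          have hgum := IH (u - 1) (by omega) (by omega)
          have hcast : ((u - 1 : ℕ) : ℤ) = (u : ℤ) - 1 := by omega
          have huu : g (Sum.inr (l, ⟨u + 1, by omega⟩)) = g (Sum.inr (l, ⟨u + 1, h⟩)) := rfl
          rw [if_neg (by omega), huu, hgu, hgum, hcast] at hru
          push_cast
          linarith
  -- the relation β = α + (k-1) s l - (k-2) mv l for every branch l
  have hbeta : ∀ l : Fin n, β = α + ((k:ℤ) - 1) * s l - ((k:ℤ) - 2) * mv l := by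
    intro l
    have hlast := hval l (k-3) (by omega)
    by_cases hk3 : k - 3 = 0
    · have hg0 := hchain l (k-3) (by omega)
      rw [if_pos hk3, if_pos rfl, dif_neg (by omega), dif_neg (by omega), if_pos hk3,
        hg0] at hlast
      have c1 : ((k - 3 : ℕ) : ℤ) = 0 := by omega
      have c2 : (k:ℤ) = 3 := by omega
      rw [c1] at hlast
      rw [c2]
      linarith
    · have ha := hchain l (k-3) (by omega)
      have hb := hchain l (k-3-1) (by omega)
      rw [if_neg hk3, if_pos rfl, dif_neg (by omega), dif_pos (Nat.pos_of_ne_zero hk3),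
        if_neg hk3, ha, hb] at hlast
      have c1 : ((k - 3 : ℕ) : ℤ) = (k:ℤ) - 3 := by omega
      have c2 : ((k - 3 - 1 : ℕ) : ℤ) = (k:ℤ) - 4 := by omega
      rw [c1, c2] at hlast
      linear_combination -hlast
  -- the equation at the vertex u
  have hU := congrFun hg (Sum.inl 0)
  rw [row_u hk] at hU
  have hUr : m * pointDiff (hv k n i ⟨0, h2⟩) (hv k n j ⟨0, h2⟩) (Sum.inl 0) = 0 := by
    simp [pointDiff, hv]
  rw [hUr] at hU
  have hssum : ∑ l, s l = α - β := by
    have he : ∀ l : Fin n, (α - g (Sum.inr (l, ⟨0, by omega⟩))) = - s l := by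
      intro l
      show α - g (Sum.inr (l, ⟨0, h2⟩)) = - s l
      simp [hs]
    rw [Finset.sum_congr rfl (fun l _ => he l), Finset.sum_neg_distrib] at hU
    linarith
  have hmvsum : ∑ l, mv l = 0 := by
    simp only [hmv]
    rw [sum_pair hij]
    ring
  have hsb : (n:ℤ) * β = (n:ℤ) * α + ((k:ℤ) - 1) * (α - β) := by
    have h1 := Finset.sum_congr rfl (fun l (_ : l ∈ Finset.univ) => hbeta l)
    rw [Finset.sum_const, Finset.card_univ, Fintype.card_fin] at h1
    rw [Finset.sum_sub_distrib, Finset.sum_add_distrib, Finset.sum_const, Finset.card_univ,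
      Fintype.card_fin, ← Finset.mul_sum, ← Finset.mul_sum, hssum, hmvsum, mul_zero,
      sub_zero] at h1
    simpa [nsmul_eq_mul] using h1
  have hβα : β = α := by
    have hfac : ((n:ℤ) + (k:ℤ) - 1) * (β - α) = 0 := by linear_combination hsb
    rcases mul_eq_zero.mp hfac with hc | hc
    · have hn' : (2:ℤ) ≤ (n:ℤ) := by exact_mod_cast hn
      have hk' : (3:ℤ) ≤ (k:ℤ) := by exact_mod_cast hk
      linarith
    · linarith
  have hbi := hbeta i
  have hmvi : mv i = m := by simp [hmv]
  rw [hβα, hmvi] at hbi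
  exact ⟨m - s i, by linear_combination -hbi⟩

lemma class_nsmul_eq_zero_iff {V : Type*} [Fintype V] [DecidableEq V] (G : SimpleGraph V)
    [DecidableRel G.Adj] (D : V → ℤ) (hD : D ∈ Div0 V) (m : ℕ) :
    m • divisorClass G D hD = 0 ↔ ∃ g : V → ℤ, (G.lapMatrix ℤ).mulVec g = m • D := by
  have h1 : m • divisorClass G D hD
      = (QuotientAddGroup.mk (m • ⟨D, hD⟩) : Div0 V ⧸ ((Prin G).addSubgroupOf (Div0 V))) := by
    rw [divisorClass]
    exact ((QuotientAddGroup.mk' ((Prin G).addSubgroupOf (Div0 V))).map_nsmul m _).symm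
  rw [h1]
  change (_ : Div0 V ⧸ ((Prin G).addSubgroupOf (Div0 V))) = 0 ↔ _
  rw [QuotientAddGroup.eq_zero_iff, AddSubgroup.mem_addSubgroupOf]
  have h2 : ((m • (⟨D, hD⟩ : Div0 V)) : V → ℤ) = m • D := rfl
  rw [h2, Prin]
  simp only [AddMonoidHom.mem_range, LinearMap.toAddMonoidHom_coe, Matrix.mulVecLin_apply]
  exact ⟨fun ⟨g, hg⟩ => ⟨g, hg⟩, fun ⟨g, hg⟩ => ⟨g, hg⟩⟩

end HingeProofAux

/-- For all integers `k ≥ 3`, `n ≥ 2` and distinct indices `i ≠ j`, the class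
of the divisor `η_{i,j}` (value `1` at `v_{i,1}`, `-1` at `v_{j,1}`, `0` elsewhere) in the
critical group `K(H_{k,n})` has additive order exactly `k - 1`. -/
theorem hinge_eta_addOrderOf (k n : ℕ) (hk : 3 ≤ k) (hn : 2 ≤ n) (i j : Fin n) (hij : i ≠ j) :
    addOrderOf (divisorClass (Hinge k n)
      (pointDiff (hv k n i ⟨0, by omega⟩) (hv k n j ⟨0, by omega⟩))
      (pointDiff_mem _ _)) = k - 1 := by
  have h2 : 0 < k - 2 := by omega
  have hcast : ((k - 1 : ℕ) : ℤ) = (k:ℤ) - 1 := by omega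
  set D := pointDiff (hv k n i ⟨0, by omega⟩) (hv k n j ⟨0, by omega⟩) with hD
  set x := divisorClass (Hinge k n) D (pointDiff_mem _ _) with hx
  have key : ∀ m : ℕ, (m • x = 0) ↔
      ∃ g : HingeVertex k n → ℤ, ((Hinge k n).lapMatrix ℤ).mulVec g = m • D :=
    fun m => class_nsmul_eq_zero_iff (Hinge k n) D (pointDiff_mem _ _) m
  have hup : (k - 1) • x = 0 := by
    refine (key (k - 1)).mpr ⟨gwit k n i j, ?_⟩
    rw [partA hk hij h2]
    funext y
    simp only [Pi.smul_apply, nsmul_eq_mul, hcast]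
    rfl
  have hdvd1 : addOrderOf x ∣ (k - 1) := addOrderOf_dvd_of_nsmul_eq_zero hup
  have hlow : ∀ m : ℕ, m • x = 0 → (k - 1) ∣ m := by
    intro m hm
    obtain ⟨g, hg⟩ := (key m).mp hm
    have hint : ((k:ℤ) - 1) ∣ (m:ℤ) := by
      refine partB hk hn hij h2 (m:ℤ) g ?_
      rw [hg]
      funext y
      simp only [Pi.smul_apply, nsmul_eq_mul]
      rfl
    have h' : ((k - 1 : ℕ) : ℤ) ∣ (m:ℤ) := by rwa [hcast]
    exact_mod_cast h'
  exact Nat.dvd_antisymm hdvd1 (hlow (addOrderOf x) (addOrderOf_nsmul_eq_zero x))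
end

section
/- For all integers k ≥ 3 and n ≥ 3, the critical group K(H_{k,n}) of the hinge graph H_{k,n} is not a cyclic group. -/
namespace HingeProof
open Matrix

variable {k n : ℕ}

/-- Potential function along the `a`-th chain. -/
def chain (k n : ℕ) (a : Fin n) : HingeVertex k n → ℤ
  | Sum.inl _ => 0
  | Sum.inr p => if p.1 = a then (p.2.val : ℤ) + 1 else 0

lemma adj_inl_inr (t : Fin 2) (p : Fin n × Fin (k - 2)) :
    (Hinge k n).Adj (Sum.inl t) (Sum.inr p) ↔
      (t = 0 ∧ p.2.val = 0) ∨ (t = 1 ∧ p.2.val = k - 3) := by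
  simp only [Hinge, SimpleGraph.fromRel_adj, hingeRelB, ne_eq, reduceCtorEq,
    not_false_eq_true, true_and, Bool.and_eq_true, beq_iff_eq]

lemma adj_inr_inl (t : Fin 2) (p : Fin n × Fin (k - 2)) :
    (Hinge k n).Adj (Sum.inr p) (Sum.inl t) ↔
      (t = 0 ∧ p.2.val = 0) ∨ (t = 1 ∧ p.2.val = k - 3) := by
  rw [SimpleGraph.adj_comm]; exact adj_inl_inr t p

lemma adj_inr_inr (p q : Fin n × Fin (k - 2)) :
    (Hinge k n).Adj (Sum.inr p) (Sum.inr q) ↔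
      p.1 = q.1 ∧ (q.2.val = p.2.val + 1 ∨ p.2.val = q.2.val + 1) := by
  simp only [Hinge, SimpleGraph.fromRel_adj, hingeRelB, ne_eq, Sum.inr.injEq,
    Bool.and_eq_true, beq_iff_eq]
  constructor
  · rintro ⟨-, (⟨h1, h2⟩ | ⟨h1, h2⟩)⟩
    · exact ⟨h1, Or.inl h2⟩
    · exact ⟨h1.symm, Or.inr h2⟩
  · rintro ⟨h1, h2⟩
    refine ⟨?_, by tauto⟩
    intro he
    have : p.2.val = q.2.val := by rw [he]
    omega

lemma lap_mulVec_eq {V : Type*} [Fintype V] [DecidableEq V] (G : SimpleGraph V)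
    [DecidableRel G.Adj] (c : V → ℤ) (x : V) :
    (G.lapMatrix ℤ *ᵥ c) x = ∑ y, if G.Adj x y then c x - c y else 0 := by
  rw [SimpleGraph.lapMatrix_mulVec_apply]
  rw [← Finset.sum_filter, ← SimpleGraph.neighborFinset_eq_filter,
    Finset.sum_sub_distrib, Finset.sum_const, SimpleGraph.degree]
  simp [nsmul_eq_mul]

/-- Sum of an indicator over `Fin N`. -/
lemma sum_fin_ite {N : ℕ} (m : ℕ) (f : ℤ) :
    (∑ j : Fin N, if j.val = m then f else 0) = if m < N then f else 0 := by
  by_cases h : m < N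
  · rw [if_pos h, Finset.sum_eq_single (⟨m, h⟩ : Fin N)]
    · simp
    · intro b _ hb
      exact if_neg (fun hc => hb (Fin.ext hc))
    · simp
  · rw [if_neg h, Finset.sum_eq_zero]
    intro j _
    exact if_neg (fun hc : j.val = m => h (hc ▸ j.isLt))


lemma chain_inl (a : Fin n) (t : Fin 2) : chain k n a (Sum.inl t) = 0 := rfl

lemma chain_inr (a : Fin n) (p : Fin n × Fin (k - 2)) :
    chain k n a (Sum.inr p) = if p.1 = a then (p.2.val : ℤ) + 1 else 0 := rfl

lemma sum_fin_pred {N : ℕ} (m : ℕ) (f : ℤ) :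
    (∑ j' : Fin N, if m = j'.val + 1 then f else 0) =
      if 1 ≤ m ∧ m - 1 < N then f else 0 := by
  have : ∀ j' : Fin N, (if m = j'.val + 1 then f else 0) =
      (if j'.val = m - 1 then (if 1 ≤ m then f else 0) else 0) := by
    intro j'
    split_ifs <;> omega
  rw [Finset.sum_congr rfl (fun j' _ => this j'), sum_fin_ite]
  split_ifs <;> omega

lemma lap_chain_inl0 (hk : 3 ≤ k) (a : Fin n) :
    ((Hinge k n).lapMatrix ℤ *ᵥ chain k n a) (Sum.inl 0) = -1 := by
  rw [lap_mulVec_eq, Fintype.sum_sum_type]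
  have h1 : (∑ t' : Fin 2, if (Hinge k n).Adj (Sum.inl 0) (Sum.inl t') then
      chain k n a (Sum.inl 0) - chain k n a (Sum.inl t') else 0) = 0 := by
    apply Finset.sum_eq_zero; intro t' _; simp [chain_inl]
  rw [h1, zero_add]
  rw [Finset.sum_eq_single (a, (⟨0, by omega⟩ : Fin (k - 2)))]
  · rw [if_pos]
    · simp [chain_inl, chain_inr]
    · rw [adj_inl_inr]; left; exact ⟨rfl, rfl⟩
  · rintro ⟨i, j⟩ _ hb
    rw [chain_inl, chain_inr]
    by_cases hadj : (Hinge k n).Adj (Sum.inl 0) (Sum.inr (i, j))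
    · rw [if_pos hadj]
      rw [adj_inl_inr] at hadj
      have hj : j.val = 0 := by
        rcases hadj with ⟨-, h⟩ | ⟨h, -⟩
        · exact h
        · exact absurd h (by decide)
      have hia : i ≠ a := by
        intro h
        exact hb (by subst h; congr 1; exact Fin.ext hj)
      rw [if_neg hia]; ring
    · rw [if_neg hadj]
  · simp

lemma lap_chain_inl1 (hk : 3 ≤ k) (a : Fin n) :
    ((Hinge k n).lapMatrix ℤ *ᵥ chain k n a) (Sum.inl 1) = -((k : ℤ) - 2) := by
  rw [lap_mulVec_eq, Fintype.sum_sum_type]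
  have h1 : (∑ t' : Fin 2, if (Hinge k n).Adj (Sum.inl 1) (Sum.inl t') then
      chain k n a (Sum.inl 1) - chain k n a (Sum.inl t') else 0) = 0 := by
    apply Finset.sum_eq_zero; intro t' _; simp [chain_inl]
  rw [h1, zero_add]
  rw [Finset.sum_eq_single (a, (⟨k - 3, by omega⟩ : Fin (k - 2)))]
  · rw [if_pos]
    · rw [chain_inl, chain_inr, if_pos rfl]
      show (0:ℤ) - (((k - 3 : ℕ) : ℤ) + 1) = -((k : ℤ) - 2)
      omega
    · rw [adj_inl_inr]; right; exact ⟨rfl, rfl⟩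
  · rintro ⟨i, j⟩ _ hb
    rw [chain_inl, chain_inr]
    by_cases hadj : (Hinge k n).Adj (Sum.inl 1) (Sum.inr (i, j))
    · rw [if_pos hadj]
      rw [adj_inl_inr] at hadj
      have hj : j.val = k - 3 := by
        rcases hadj with ⟨h, -⟩ | ⟨-, h⟩
        · exact absurd h (by decide)
        · exact h
      have hia : i ≠ a := by
        intro h
        exact hb (by subst h; congr 1; exact Fin.ext hj)
      rw [if_neg hia]; ring
    · rw [if_neg hadj]
  · simp

lemma lap_chain_inr (hk : 3 ≤ k) (a : Fin n) (i : Fin n) (j : Fin (k - 2)) :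
    ((Hinge k n).lapMatrix ℤ *ᵥ chain k n a) (Sum.inr (i, j)) =
      if i = a ∧ j.val = k - 3 then (k : ℤ) - 1 else 0 := by
  rw [lap_mulVec_eq, Fintype.sum_sum_type]
  by_cases hia : i = a
  case neg =>
    rw [if_neg (by tauto)]
    rw [Finset.sum_eq_zero, Finset.sum_eq_zero, add_zero]
    · rintro ⟨i', j'⟩ _
      split_ifs with h
      · rw [adj_inr_inr] at h
        rw [chain_inr, chain_inr, if_neg hia, if_neg (by rw [← h.1]; exact hia)]
        ring
      · rfl
    · intro t' _
      split_ifs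
      · rw [chain_inl, chain_inr, if_neg hia]; ring
      · rfl
  case pos =>
    subst hia
    -- first sum over Fin 2
    have h1 : (∑ t' : Fin 2, if (Hinge k n).Adj (Sum.inr (i, j)) (Sum.inl t') then
        chain k n (i) (Sum.inr (i, j)) - chain k n i (Sum.inl t') else 0) =
        (if j.val = 0 then (j.val : ℤ) + 1 else 0) +
        (if j.val = k - 3 then (j.val : ℤ) + 1 else 0) := by
      rw [Fin.sum_univ_two]
      have hval : chain k n i (Sum.inr (i, j)) - chain k n i (Sum.inl 0) =
          (j.val : ℤ) + 1 := by
        rw [chain_inl, chain_inr, if_pos rfl]; ring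
      have hval' : chain k n i (Sum.inr (i, j)) - chain k n i (Sum.inl 1) =
          (j.val : ℤ) + 1 := by
        rw [chain_inl, chain_inr, if_pos rfl]; ring
      have hc0 : (Hinge k n).Adj (Sum.inr (i, j)) (Sum.inl 0) ↔ j.val = 0 := by
        rw [adj_inr_inl]
        constructor
        · rintro (⟨-, h⟩ | ⟨h, -⟩)
          · exact h
          · exact absurd h (by decide)
        · intro h; left; exact ⟨rfl, h⟩
      have hc1 : (Hinge k n).Adj (Sum.inr (i, j)) (Sum.inl 1) ↔ j.val = k - 3 := by
        rw [adj_inr_inl]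
        constructor
        · rintro (⟨h, -⟩ | ⟨-, h⟩)
          · exact absurd h (by decide)
          · exact h
        · intro h; right; exact ⟨rfl, h⟩
      rw [if_congr hc0 hval rfl, if_congr hc1 hval' rfl]
    rw [h1, Fintype.sum_prod_type]
    -- inner sum over Fin n: only i' = i contributes
    have h2 : ∀ i' : Fin n, (∑ j' : Fin (k - 2),
        if (Hinge k n).Adj (Sum.inr (i, j)) (Sum.inr (i', j')) then
          chain k n i (Sum.inr (i, j)) - chain k n i (Sum.inr (i', j')) else 0) =
        if i = i' then (∑ j' : Fin (k - 2),
          if (j'.val = j.val + 1 ∨ j.val = j'.val + 1) then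
            ((j.val : ℤ) - (j'.val : ℤ)) else 0) else 0 := by
      intro i'
      by_cases hii : i = i'
      · subst hii
        rw [if_pos rfl]
        apply Finset.sum_congr rfl
        intro j' _
        have hc : (Hinge k n).Adj (Sum.inr (i, j)) (Sum.inr (i, j')) ↔
            (j'.val = j.val + 1 ∨ j.val = j'.val + 1) := by
          rw [adj_inr_inr]; simp only [true_and]
        have hval : chain k n i (Sum.inr (i, j)) - chain k n i (Sum.inr (i, j')) =
            (j.val : ℤ) - (j'.val : ℤ) := by
          rw [chain_inr, chain_inr, if_pos rfl, if_pos rfl]; ring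
        rw [if_congr hc hval rfl]
      · rw [if_neg hii]
        apply Finset.sum_eq_zero
        intro j' _
        rw [if_neg]
        rw [adj_inr_inr]
        rintro ⟨h, -⟩
        exact hii h
    rw [Finset.sum_congr rfl (fun i' _ => h2 i'), Finset.sum_ite_eq]
    rw [if_pos (Finset.mem_univ i)]
    have h3 : (∑ j' : Fin (k - 2),
        if (j'.val = j.val + 1 ∨ j.val = j'.val + 1) then
          ((j.val : ℤ) - (j'.val : ℤ)) else 0) =
        (if j.val + 1 < k - 2 then (-1 : ℤ) else 0) +
        (if 1 ≤ j.val ∧ j.val - 1 < k - 2 then (1 : ℤ) else 0) := by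
      have hsplit : ∀ j' : Fin (k - 2),
          (if (j'.val = j.val + 1 ∨ j.val = j'.val + 1) then
            ((j.val : ℤ) - (j'.val : ℤ)) else 0) =
          (if j'.val = j.val + 1 then (-1 : ℤ) else 0) +
          (if j.val = j'.val + 1 then (1 : ℤ) else 0) := by
        intro j'
        split_ifs <;> omega
      rw [Finset.sum_congr rfl (fun j' _ => hsplit j'), Finset.sum_add_distrib,
        sum_fin_ite, sum_fin_pred]
    rw [h3]
    have hjlt : j.val < k - 2 := j.isLt
    have hk' : 3 ≤ k := hk
    split_ifs <;> push_cast <;> omega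

/-- The divisibility key lemma. -/
lemma lap_chain_sub (hk : 3 ≤ k) (a b : Fin n) :
    (Hinge k n).lapMatrix ℤ *ᵥ (chain k n a - chain k n b) = fun x =>
      ((k - 1 : ℕ) : ℤ) *
        ((if x = Sum.inr (a, (⟨k - 3, by omega⟩ : Fin (k - 2))) then 1 else 0) -
         (if x = Sum.inr (b, (⟨k - 3, by omega⟩ : Fin (k - 2))) then 1 else 0)) := by
  funext x
  rw [Matrix.mulVec_sub, Pi.sub_apply]
  rcases x with t | ⟨i, j⟩
  · have h0 : t = 0 ∨ t = 1 := by
      obtain ⟨tv, ht⟩ := t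
      interval_cases tv
      · left; rfl
      · right; rfl
    rcases h0 with rfl | rfl
    · rw [lap_chain_inl0 hk, lap_chain_inl0 hk]
      simp
    · rw [lap_chain_inl1 hk, lap_chain_inl1 hk]
      simp
  · rw [lap_chain_inr hk, lap_chain_inr hk]
    have hcast : ((k - 1 : ℕ) : ℤ) = (k : ℤ) - 1 := by omega
    have h1 : (Sum.inr (i, j) = (Sum.inr (a, (⟨k - 3, by omega⟩ : Fin (k - 2))) :
        HingeVertex k n)) ↔ (i = a ∧ j.val = k - 3) := by
      constructor
      · intro h
        injection h with h
        obtain ⟨h1, h2⟩ := Prod.mk.injEq .. ▸ h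
        exact ⟨h1, by rw [h2]⟩
      · rintro ⟨rfl, h2⟩
        congr 1
        exact congrArg _ (Fin.ext h2)
    have h2 : (Sum.inr (i, j) = (Sum.inr (b, (⟨k - 3, by omega⟩ : Fin (k - 2))) :
        HingeVertex k n)) ↔ (i = b ∧ j.val = k - 3) := by
      constructor
      · intro h
        injection h with h
        obtain ⟨h1, h2⟩ := Prod.mk.injEq .. ▸ h
        exact ⟨h1, by rw [h2]⟩
      · rintro ⟨rfl, h2⟩
        congr 1
        exact congrArg _ (Fin.ext h2)
    simp only [h1, h2]
    split_ifs <;> ring_nf <;> omega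


/-- The chain-potential homomorphism into `ZMod m`. -/
def phi (k n m : ℕ) (a b : Fin n) : (HingeVertex k n → ℤ) →+ ZMod m where
  toFun D := ((∑ v, (chain k n a v - chain k n b v) * D v : ℤ) : ZMod m)
  map_zero' := by simp
  map_add' x y := by
    simp only [Pi.add_apply, mul_add, Finset.sum_add_distrib, Int.cast_add]

lemma phi_apply (m : ℕ) (a b : Fin n) (D : HingeVertex k n → ℤ) :
    phi k n m a b D = ((∑ v, (chain k n a v - chain k n b v) * D v : ℤ) : ZMod m) := rfl

lemma phi_lap (hk : 3 ≤ k) (a b : Fin n) (y : HingeVertex k n → ℤ) :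
    phi k n (k - 1) a b ((Hinge k n).lapMatrix ℤ *ᵥ y) = 0 := by
  rw [phi_apply]
  have h1 : (∑ v, (chain k n a v - chain k n b v) * ((Hinge k n).lapMatrix ℤ *ᵥ y) v : ℤ)
      = (chain k n a - chain k n b) ⬝ᵥ ((Hinge k n).lapMatrix ℤ *ᵥ y) := rfl
  have h2 : (chain k n a - chain k n b) ⬝ᵥ ((Hinge k n).lapMatrix ℤ *ᵥ y)
      = ((Hinge k n).lapMatrix ℤ *ᵥ (chain k n a - chain k n b)) ⬝ᵥ y := by
    rw [Matrix.dotProduct_mulVec, ← Matrix.mulVec_transpose,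
      (SimpleGraph.isSymm_lapMatrix ℤ (Hinge k n)).eq]
  have h3 : ((Hinge k n).lapMatrix ℤ *ᵥ (chain k n a - chain k n b)) ⬝ᵥ y =
      ((k - 1 : ℕ) : ℤ) *
        (y (Sum.inr (a, (⟨k - 3, by omega⟩ : Fin (k - 2)))) -
         y (Sum.inr (b, (⟨k - 3, by omega⟩ : Fin (k - 2))))) := by
    rw [lap_chain_sub hk a b]
    simp only [dotProduct, mul_assoc, ← Finset.mul_sum, sub_mul,
      Finset.sum_sub_distrib, ite_mul, one_mul, zero_mul, Finset.sum_ite_eq',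
      Finset.mem_univ, if_pos]
  rw [h1, h2, h3]
  push_cast
  rw [ZMod.natCast_self]
  ring

lemma phi_pointDiff (m : ℕ) (a b : Fin n) (x : HingeVertex k n) :
    phi k n m a b (pointDiff x (Sum.inl 0)) =
      ((chain k n a x - chain k n b x : ℤ) : ZMod m) := by
  rw [phi_apply]
  congr 1
  simp only [pointDiff, mul_sub, Finset.sum_sub_distrib, mul_ite, mul_one, mul_zero,
    Finset.sum_ite_eq', Finset.mem_univ, if_pos]
  rw [show chain k n a (Sum.inl 0) = 0 from rfl, show chain k n b (Sum.inl 0) = 0 from rfl]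
  ring

lemma not_addCyclic_prod (m : ℕ) (hm : 2 ≤ m) : ¬ IsAddCyclic (ZMod m × ZMod m) := by
  intro h
  have hcard : Nat.card (ZMod m × ZMod m) = m * m := by
    rw [Nat.card_prod, Nat.card_zmod]
  have hexp := IsAddCyclic.exponent_eq_card (α := ZMod m × ZMod m)
  have hdvd : AddMonoid.exponent (ZMod m × ZMod m) ∣ m := by
    rw [AddMonoid.exponent_dvd]
    intro g
    rw [addOrderOf_dvd_iff_nsmul_eq_zero]
    rcases g with ⟨g1, g2⟩
    rw [Prod.smul_mk, Prod.mk_eq_zero]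
    constructor <;> rw [nsmul_eq_mul, ZMod.natCast_self, zero_mul]
  rw [hexp, hcard] at hdvd
  have h1 := Nat.le_of_dvd (by omega) hdvd
  have h2 : 2 * m ≤ m * m := Nat.mul_le_mul_right m hm
  omega

end HingeProof

/-- For all integers `k ≥ 3` and `n ≥ 3`, the critical group `K(H_{k,n})`
is not cyclic. -/
theorem hinge_criticalGroup_not_cyclic (k n : ℕ) (hk : 3 ≤ k) (hn : 3 ≤ n) :
    ¬ IsAddCyclic (CriticalGroup (Hinge k n)) := by
  intro hcyc
  have hm2 : 2 ≤ k - 1 := by omega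
  haveI : NeZero (k - 1) := ⟨by omega⟩
  let a0 : Fin n := ⟨0, by omega⟩
  let a1 : Fin n := ⟨1, by omega⟩
  let a2 : Fin n := ⟨2, by omega⟩
  let m := k - 1
  let Φ : (HingeVertex k n → ℤ) →+ ZMod m × ZMod m :=
    (HingeProof.phi k n m a0 a2).prod (HingeProof.phi k n m a1 a2)
  have hker : ∀ x ∈ (Prin (Hinge k n)).addSubgroupOf (Div0 (HingeVertex k n)),
      (Φ.comp (Div0 (HingeVertex k n)).subtype) x = 0 := by
    intro x hx
    rw [AddSubgroup.mem_addSubgroupOf] at hx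
    obtain ⟨y, hy⟩ := hx
    have hy' : Matrix.mulVec ((Hinge k n).lapMatrix ℤ) y = (x : HingeVertex k n → ℤ) := hy
    show Φ (x : HingeVertex k n → ℤ) = 0
    rw [← hy']
    have e1 := HingeProof.phi_lap hk a0 a2 y
    have e2 := HingeProof.phi_lap hk a1 a2 y
    exact Prod.ext e1 e2
  let ψ : CriticalGroup (Hinge k n) →+ ZMod m × ZMod m :=
    QuotientAddGroup.lift _ (Φ.comp (Div0 (HingeVertex k n)).subtype) hker
  have hchain : ∀ (a i : Fin n),
      HingeProof.chain k n a (Sum.inr (i, (⟨0, by omega⟩ : Fin (k - 2)))) =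
        if i = a then 1 else 0 := by
    intro a i
    rw [HingeProof.chain_inr]
    split_ifs <;> simp
  -- the two basic divisors
  let d1 : HingeVertex k n → ℤ :=
    pointDiff (Sum.inr (a0, (⟨0, by omega⟩ : Fin (k - 2)))) (Sum.inl 0)
  let d2 : HingeVertex k n → ℤ :=
    pointDiff (Sum.inr (a1, (⟨0, by omega⟩ : Fin (k - 2)))) (Sum.inl 0)
  have ha02 : a0 ≠ a2 := by simp [a0, a2, Fin.ext_iff]
  have ha12 : a1 ≠ a2 := by simp [a1, a2, Fin.ext_iff]
  have ha10 : a1 ≠ a0 := by simp [a1, a0, Fin.ext_iff]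
  have ha01 : a0 ≠ a1 := by simp [a0, a1, Fin.ext_iff]
  have hΦ1 : Φ d1 = (1, 0) := by
    have e1 : HingeProof.phi k n m a0 a2 d1 = 1 := by
      rw [HingeProof.phi_pointDiff, hchain, hchain, if_pos rfl, if_neg ha02]
      norm_num
    have e2 : HingeProof.phi k n m a1 a2 d1 = 0 := by
      rw [HingeProof.phi_pointDiff, hchain, hchain, if_neg ha01, if_neg ha02]
      norm_num
    exact Prod.ext e1 e2
  have hΦ2 : Φ d2 = (0, 1) := by
    have e1 : HingeProof.phi k n m a0 a2 d2 = 0 := by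
      rw [HingeProof.phi_pointDiff, hchain, hchain, if_neg ha10, if_neg ha12]
      norm_num
    have e2 : HingeProof.phi k n m a1 a2 d2 = 1 := by
      rw [HingeProof.phi_pointDiff, hchain, hchain, if_pos rfl, if_neg ha12]
      norm_num
    exact Prod.ext e1 e2
  have hsurj : Function.Surjective ψ := by
    rintro ⟨p, q⟩
    have hmem : (p.val : ℤ) • d1 + (q.val : ℤ) • d2 ∈ Div0 (HingeVertex k n) :=
      AddSubgroup.add_mem _
        (AddSubgroup.zsmul_mem _ (pointDiff_mem _ _) _)
        (AddSubgroup.zsmul_mem _ (pointDiff_mem _ _) _)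
    refine ⟨QuotientAddGroup.mk ⟨(p.val : ℤ) • d1 + (q.val : ℤ) • d2, hmem⟩, ?_⟩
    show (Φ.comp (Div0 (HingeVertex k n)).subtype) _ = _
    show Φ ((p.val : ℤ) • d1 + (q.val : ℤ) • d2) = (p, q)
    rw [map_add, map_zsmul, map_zsmul, hΦ1, hΦ2]
    rw [Prod.smul_mk, Prod.smul_mk, Prod.mk_add_mk]
    rw [smul_zero, smul_zero, add_zero, zero_add]
    rw [zsmul_eq_mul, zsmul_eq_mul, mul_one, mul_one]
    rw [Int.cast_natCast, Int.cast_natCast]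
    exact Prod.ext (ZMod.natCast_rightInverse p) (ZMod.natCast_rightInverse q)
  haveI := hcyc
  have : IsAddCyclic (ZMod m × ZMod m) := isAddCyclic_of_surjective ψ hsurj
  exact HingeProof.not_addCyclic_prod m hm2 this
end

section
/- For all integers k ≥ 3 and n ≥ 2, the critical group K(H_{k,n}) of the hinge graph H_{k,n} is isomorphic as an abelian group to (ℤ/(k−1)ℤ)^{n−2} ⊕ ℤ/((k−1)(k+n−1))ℤ. -/
namespace HingeAux
open Finset Matrix

variable (m n' : ℕ)

abbrev V2 := HingeVertex (m+3) (n'+2)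

lemma adj_ll (a b : Fin 2) :
    (Hinge (m+3) (n'+2)).Adj (Sum.inl a) (Sum.inl b) ↔ a ≠ b := by
  rw [Hinge, SimpleGraph.fromRel_adj]
  simp [hingeRelB, ne_comm]

lemma adj_lr (a : Fin 2) (i : Fin (n'+2)) (j : Fin (m+1)) :
    (Hinge (m+3) (n'+2)).Adj (Sum.inl a) (Sum.inr (i, j)) ↔
      (a = 0 ∧ j.val = 0) ∨ (a = 1 ∧ j.val = m) := by
  rw [Hinge, SimpleGraph.fromRel_adj]
  simp [hingeRelB]
  exact or_congr (and_congr Iff.rfl (Fin.val_eq_zero_iff (a := j))) Iff.rfl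

lemma adj_rl (a : Fin 2) (i : Fin (n'+2)) (j : Fin (m+1)) :
    (Hinge (m+3) (n'+2)).Adj (Sum.inr (i, j)) (Sum.inl a) ↔
      (a = 0 ∧ j.val = 0) ∨ (a = 1 ∧ j.val = m) := by
  rw [SimpleGraph.adj_comm]; exact adj_lr m n' a i j

lemma adj_rr (i i' : Fin (n'+2)) (j j' : Fin (m+1)) :
    (Hinge (m+3) (n'+2)).Adj (Sum.inr (i, j)) (Sum.inr (i', j')) ↔
      i = i' ∧ (j'.val = j.val + 1 ∨ j.val = j'.val + 1) := by
  rw [Hinge, SimpleGraph.fromRel_adj]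
  simp only [hingeRelB, Bool.and_eq_true, beq_iff_eq, ne_eq, Sum.inr.injEq, Prod.mk.injEq]
  constructor
  · rintro ⟨hne, h | h⟩
    · exact ⟨h.1, Or.inl h.2⟩
    · exact ⟨h.1.symm, Or.inr h.2⟩
  · rintro ⟨rfl, h | h⟩
    · exact ⟨(by rintro ⟨h1, rfl⟩; omega), Or.inl ⟨rfl, h⟩⟩
    · exact ⟨(by rintro ⟨h1, rfl⟩; omega), Or.inr ⟨rfl, h⟩⟩

lemma lap_apply (x : V2 m n' → ℤ) (v : V2 m n') :
    ((Hinge (m+3) (n'+2)).lapMatrix ℤ *ᵥ x) v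
      = ∑ z, if (Hinge (m+3) (n'+2)).Adj v z then x v - x z else 0 := by
  rw [SimpleGraph.lapMatrix_mulVec_apply]
  have hdeg : ((Hinge (m+3) (n'+2)).degree v : ℤ) * x v
      = ∑ z ∈ (Hinge (m+3) (n'+2)).neighborFinset v, x v := by
    rw [sum_const, SimpleGraph.degree, nsmul_eq_mul]
  rw [hdeg, ← sum_sub_distrib, SimpleGraph.neighborFinset_eq_filter, sum_filter]

def Dv (D : V2 m n' → ℤ) (i : Fin (n'+2)) (t : ℕ) : ℤ :=
  if h : t < m+1 then D (Sum.inr (i, ⟨t, h⟩)) else 0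

def Acyc (D : V2 m n' → ℤ) (i : Fin (n'+2)) : ℤ :=
  ∑ t ∈ range (m+1), ((t : ℤ)+1) * Dv m n' D i t

def bigI (D : V2 m n' → ℤ) : ℤ :=
  (∑ i, Acyc m n' D i) + ((m:ℤ)+2) * D (Sum.inl 1)
    - ((m:ℤ)+(n':ℤ)+4) * Acyc m n' D 1

lemma Dv_add (D E : V2 m n' → ℤ) (i : Fin (n'+2)) (t : ℕ) :
    Dv m n' (D + E) i t = Dv m n' D i t + Dv m n' E i t := by
  unfold Dv; split <;> simp

lemma Acyc_add (D E : V2 m n' → ℤ) (i : Fin (n'+2)) :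
    Acyc m n' (D + E) i = Acyc m n' D i + Acyc m n' E i := by
  unfold Acyc
  rw [← sum_add_distrib]
  exact sum_congr rfl fun t _ => by rw [Dv_add]; ring

lemma bigI_add (D E : V2 m n' → ℤ) :
    bigI m n' (D + E) = bigI m n' D + bigI m n' E := by
  unfold bigI
  simp only [Acyc_add, Pi.add_apply]
  rw [sum_add_distrib]
  ring

def psi : (V2 m n' → ℤ) →+ (Fin n' → ZMod (m+2)) × ZMod ((m+2) * (m+n'+4)) where
  toFun D := (fun c => ((Acyc m n' D c.succ.succ - Acyc m n' D 1 : ℤ) : ZMod (m+2)),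
              ((bigI m n' D : ℤ) : ZMod ((m+2)*(m+n'+4))))
  map_zero' := by
    have h1 : ∀ i, Acyc m n' 0 i = 0 := by
      intro i; unfold Acyc Dv; simp
    have h2 : bigI m n' 0 = 0 := by
      unfold bigI; simp [h1]
    simp [h1, h2]
    rfl
  map_add' D E := by
    simp only [Acyc_add, bigI_add, Prod.mk_add_mk, Prod.mk.injEq]
    constructor
    · funext c; simp only [Pi.add_apply]; push_cast; ring
    · push_cast; ring

def hf (a b : ℤ) (Y : Fin (n'+2) → ℕ → ℤ) : V2 m n' → ℤ
  | Sum.inl p => if p.val = 0 then a else b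
  | Sum.inr q => Y q.1 q.2.val

lemma hf_eta (x : V2 m n' → ℤ) :
    x = hf m n' (x (Sum.inl 0)) (x (Sum.inl 1)) (Dv m n' x) := by
  funext v
  match v with
  | Sum.inl a =>
    rcases a with ⟨av, ha⟩
    interval_cases av <;> simp [hf]
  | Sum.inr ⟨i, j⟩ =>
    simp [hf, Dv, show (j:ℕ) < m+1 from j.isLt]

lemma Dv_hf (a b : ℤ) (Y : Fin (n'+2) → ℕ → ℤ) (i : Fin (n'+2)) (t : ℕ) (ht : t < m+1) :
    Dv m n' (hf m n' a b Y) i t = Y i t := by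
  unfold Dv hf
  rw [dif_pos ht]

lemma Acyc_hf (a b : ℤ) (Y : Fin (n'+2) → ℕ → ℤ) (i : Fin (n'+2)) :
    Acyc m n' (hf m n' a b Y) i = ∑ t ∈ range (m+1), ((t : ℤ)+1) * Y i t := by
  unfold Acyc
  exact sum_congr rfl fun t ht => by rw [Dv_hf m n' a b Y i t (mem_range.mp ht)]

lemma lap_u (a b : ℤ) (Y : Fin (n'+2) → ℕ → ℤ) :
    ((Hinge (m+3) (n'+2)).lapMatrix ℤ *ᵥ hf m n' a b Y) (Sum.inl 0)
      = (a - b) + ∑ i : Fin (n'+2), (a - Y i 0) := by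
  rw [lap_apply, Fintype.sum_sum_type]
  have h1 : (∑ z : Fin 2, if (Hinge (m+3) (n'+2)).Adj (Sum.inl 0) (Sum.inl z)
      then hf m n' a b Y (Sum.inl 0) - hf m n' a b Y (Sum.inl z) else 0) = a - b := by
    rw [Fin.sum_univ_two]
    simp [adj_ll, hf]
  have h2 : (∑ z : Fin (n'+2) × Fin (m+1), if (Hinge (m+3) (n'+2)).Adj (Sum.inl 0) (Sum.inr z)
      then hf m n' a b Y (Sum.inl 0) - hf m n' a b Y (Sum.inr z) else 0)
      = ∑ i : Fin (n'+2), (a - Y i 0) := by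
    rw [Fintype.sum_prod_type]
    refine sum_congr rfl fun i _ => ?_
    have : ∀ j : Fin (m+1), (if (Hinge (m+3) (n'+2)).Adj (Sum.inl 0) (Sum.inr (i, j))
        then hf m n' a b Y (Sum.inl 0) - hf m n' a b Y (Sum.inr (i, j)) else 0)
        = if (j : ℕ) = 0 then a - Y i (j : ℕ) else 0 := by
      intro j
      simp only [adj_lr]
      simp [hf]
    rw [sum_congr rfl fun j _ => this j, Fin.sum_univ_eq_sum_range (fun t => if t = 0 then a - Y i t else 0)]
    rw [Finset.sum_ite_eq' (range (m+1)) 0 (fun t => a - Y i t)]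
    simp
  rw [h1]
  exact congrArg (fun t => a - b + t) h2

lemma lap_w (a b : ℤ) (Y : Fin (n'+2) → ℕ → ℤ) :
    ((Hinge (m+3) (n'+2)).lapMatrix ℤ *ᵥ hf m n' a b Y) (Sum.inl 1)
      = (b - a) + ∑ i : Fin (n'+2), (b - Y i m) := by
  rw [lap_apply, Fintype.sum_sum_type]
  have h1 : (∑ z : Fin 2, if (Hinge (m+3) (n'+2)).Adj (Sum.inl 1) (Sum.inl z)
      then hf m n' a b Y (Sum.inl 1) - hf m n' a b Y (Sum.inl z) else 0) = b - a := by
    rw [Fin.sum_univ_two]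
    simp [adj_ll, hf]
  have h2 : (∑ z : Fin (n'+2) × Fin (m+1), if (Hinge (m+3) (n'+2)).Adj (Sum.inl 1) (Sum.inr z)
      then hf m n' a b Y (Sum.inl 1) - hf m n' a b Y (Sum.inr z) else 0)
      = ∑ i : Fin (n'+2), (b - Y i m) := by
    rw [Fintype.sum_prod_type]
    refine sum_congr rfl fun i _ => ?_
    have : ∀ j : Fin (m+1), (if (Hinge (m+3) (n'+2)).Adj (Sum.inl 1) (Sum.inr (i, j))
        then hf m n' a b Y (Sum.inl 1) - hf m n' a b Y (Sum.inr (i, j)) else 0)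
        = if (j : ℕ) = m then b - Y i (j : ℕ) else 0 := by
      intro j
      simp only [adj_lr]
      simp [hf]
    rw [sum_congr rfl fun j _ => this j, Fin.sum_univ_eq_sum_range (fun t => if t = m then b - Y i t else 0)]
    rw [Finset.sum_ite_eq' (range (m+1)) m (fun t => b - Y i t)]
    simp
  rw [h1]
  exact congrArg (fun t => b - a + t) h2

lemma lap_v (a b : ℤ) (Y : Fin (n'+2) → ℕ → ℤ) (i : Fin (n'+2)) (j : Fin (m+1)) :
    ((Hinge (m+3) (n'+2)).lapMatrix ℤ *ᵥ hf m n' a b Y) (Sum.inr (i, j))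
      = 2 * Y i (j : ℕ) - (if (j : ℕ) = 0 then a else Y i ((j : ℕ) - 1))
        - (if (j : ℕ) = m then b else Y i ((j : ℕ) + 1)) := by
  rw [lap_apply, Fintype.sum_sum_type]
  have h1 : (∑ z : Fin 2, if (Hinge (m+3) (n'+2)).Adj (Sum.inr (i, j)) (Sum.inl z)
      then hf m n' a b Y (Sum.inr (i, j)) - hf m n' a b Y (Sum.inl z) else 0)
      = (if (j : ℕ) = 0 then Y i (j : ℕ) - a else 0)
        + (if (j : ℕ) = m then Y i (j : ℕ) - b else 0) := by
    rw [Fin.sum_univ_two]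
    simp only [adj_rl]
    simp [hf]
  have h2 : (∑ z : Fin (n'+2) × Fin (m+1), if (Hinge (m+3) (n'+2)).Adj (Sum.inr (i, j)) (Sum.inr z)
      then hf m n' a b Y (Sum.inr (i, j)) - hf m n' a b Y (Sum.inr z) else 0)
      = (if (j : ℕ) = m then 0 else Y i (j : ℕ) - Y i ((j : ℕ) + 1))
        + (if (j : ℕ) = 0 then 0 else Y i (j : ℕ) - Y i ((j : ℕ) - 1)) := by
    rw [Fintype.sum_prod_type]
    have hinner : ∀ i' : Fin (n'+2), (∑ j' : Fin (m+1),
        if (Hinge (m+3) (n'+2)).Adj (Sum.inr (i, j)) (Sum.inr (i', j'))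
        then hf m n' a b Y (Sum.inr (i, j)) - hf m n' a b Y (Sum.inr (i', j')) else 0)
        = if i = i' then ((if (j : ℕ) = m then 0 else Y i (j : ℕ) - Y i ((j : ℕ) + 1))
            + (if (j : ℕ) = 0 then 0 else Y i (j : ℕ) - Y i ((j : ℕ) - 1))) else 0 := by
      intro i'
      by_cases hii : i = i'
      · subst hii
        rw [if_pos rfl]
        have hterm : ∀ j' : Fin (m+1),
            (if (Hinge (m+3) (n'+2)).Adj (Sum.inr (i, j)) (Sum.inr (i, j'))
             then hf m n' a b Y (Sum.inr (i, j)) - hf m n' a b Y (Sum.inr (i, j')) else 0)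
            = (if (j' : ℕ) = (j : ℕ) + 1 then Y i (j : ℕ) - Y i (j' : ℕ) else 0)
              + (if (j : ℕ) = (j' : ℕ) + 1 then Y i (j : ℕ) - Y i (j' : ℕ) else 0) := by
          intro j'
          simp only [adj_rr, true_and]
          by_cases hA : (j' : ℕ) = (j : ℕ) + 1
          · rw [if_pos (Or.inl hA), if_pos hA, if_neg (by omega)]
            simp [hf]
          · by_cases hB : (j : ℕ) = (j' : ℕ) + 1
            · rw [if_pos (Or.inr hB), if_neg hA, if_pos hB]
              simp [hf]
            · rw [if_neg (by tauto), if_neg hA, if_neg hB]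
              simp
        rw [sum_congr rfl fun j' _ => hterm j', sum_add_distrib]
        have hA : (∑ j' : Fin (m+1), if (j' : ℕ) = (j : ℕ) + 1 then Y i (j : ℕ) - Y i (j' : ℕ) else 0)
            = if (j : ℕ) = m then 0 else Y i (j : ℕ) - Y i ((j : ℕ) + 1) := by
          rw [Fin.sum_univ_eq_sum_range (fun t => if t = (j : ℕ) + 1 then Y i (j : ℕ) - Y i t else 0)]
          rw [Finset.sum_ite_eq' (range (m+1)) ((j : ℕ) + 1) (fun t => Y i (j : ℕ) - Y i t)]
          have := j.isLt
          by_cases hjm : (j : ℕ) = m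
          · rw [if_neg (by rw [mem_range]; omega), if_pos hjm]
          · rw [if_pos (by rw [mem_range]; omega), if_neg hjm]
        have hB : (∑ j' : Fin (m+1), if (j : ℕ) = (j' : ℕ) + 1 then Y i (j : ℕ) - Y i (j' : ℕ) else 0)
            = if (j : ℕ) = 0 then 0 else Y i (j : ℕ) - Y i ((j : ℕ) - 1) := by
          rw [Fin.sum_univ_eq_sum_range (fun t => if (j : ℕ) = t + 1 then Y i (j : ℕ) - Y i t else 0)]
          by_cases hj0 : (j : ℕ) = 0
          · rw [if_pos hj0]
            refine sum_eq_zero fun t _ => if_neg (by omega)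
          · rw [if_neg hj0]
            simp only [show ∀ t : ℕ, ((j : ℕ) = t + 1) ↔ (t = (j : ℕ) - 1) from fun t => by omega]
            rw [Finset.sum_ite_eq' (range (m+1)) ((j : ℕ) - 1) (fun t => Y i (j : ℕ) - Y i t)]
            rw [if_pos (by rw [mem_range]; have := j.isLt; omega)]
        rw [hA, hB]
      · rw [if_neg hii]
        refine sum_eq_zero fun j' _ => if_neg ?_
        rw [adj_rr]
        tauto
    rw [sum_congr rfl fun i' _ => hinner i']
    rw [Finset.sum_ite_eq (univ : Finset (Fin (n'+2))) i
      (fun _ => ((if (j : ℕ) = m then 0 else Y i (j : ℕ) - Y i ((j : ℕ) + 1))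
            + (if (j : ℕ) = 0 then 0 else Y i (j : ℕ) - Y i ((j : ℕ) - 1))))]
    rw [if_pos (mem_univ i)]
  rw [h1]
  rw [show (∑ a₂ : Fin (n'+2) × Fin ((m+3)-2),
      if (Hinge (m+3) (n'+2)).Adj (Sum.inr (i, j)) (Sum.inr a₂)
      then hf m n' a b Y (Sum.inr (i, j)) - hf m n' a b Y (Sum.inr a₂) else 0)
      = (if (j : ℕ) = m then 0 else Y i (j : ℕ) - Y i ((j : ℕ) + 1))
        + (if (j : ℕ) = 0 then 0 else Y i (j : ℕ) - Y i ((j : ℕ) - 1)) from h2]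
  have : hf m n' a b Y (Sum.inr (i, j)) = Y i (j : ℕ) := rfl
  split_ifs <;> ring

lemma ALap (a b : ℤ) (Y : Fin (n'+2) → ℕ → ℤ) (i : Fin (n'+2)) :
    Acyc m n' ((Hinge (m+3) (n'+2)).lapMatrix ℤ *ᵥ hf m n' a b Y) i
      = ((m:ℤ)+2) * Y i m - a - ((m:ℤ)+1) * b := by
  unfold Acyc
  have hDv : ∀ t ∈ range (m+1), ((t : ℤ)+1) * Dv m n' ((Hinge (m+3) (n'+2)).lapMatrix ℤ *ᵥ hf m n' a b Y) i t
      = ((t : ℤ)+1) * (2 * Y i t) - ((t : ℤ)+1) * (if t = 0 then a else Y i (t - 1))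
        - ((t : ℤ)+1) * (if t = m then b else Y i (t + 1)) := by
    intro t ht
    rw [mem_range] at ht
    rw [Dv, dif_pos ht]
    rw [show (Sum.inr (i, (⟨t, ht⟩ : Fin (m+1))) : V2 m n') = Sum.inr (i, ⟨t, ht⟩) from rfl]
    rw [lap_v]
    ring
  rw [sum_congr rfl hDv]
  rw [sum_sub_distrib, sum_sub_distrib]
  have e1 : (∑ t ∈ range (m+1), ((t : ℤ)+1) * (if t = 0 then a else Y i (t - 1)))
      = a + ∑ t ∈ range m, ((t : ℤ)+2) * Y i t := by
    rw [Finset.sum_range_succ' (fun t => ((t : ℤ)+1) * (if t = 0 then a else Y i (t - 1))) m]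
    have hft : ∀ t ∈ range m, ((((t+1:ℕ)) : ℤ)+1) * (if (t+1:ℕ) = 0 then a else Y i ((t+1) - 1))
        = ((t : ℤ)+2) * Y i t := by
      intro t _
      rw [if_neg (Nat.succ_ne_zero t), Nat.add_sub_cancel]
      push_cast; ring
    rw [sum_congr rfl hft]
    norm_num [add_comm]
  have e2 : (∑ t ∈ range (m+1), ((t : ℤ)+1) * (if t = m then b else Y i (t + 1)))
      = ((m:ℤ)+1) * b + ∑ t ∈ range m, ((t : ℤ)+1) * Y i (t + 1) := by
    rw [Finset.sum_range_succ, if_pos rfl]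
    rw [add_comm]
    congr 1
    refine sum_congr rfl fun t ht => ?_
    rw [mem_range] at ht
    rw [if_neg (by omega)]
  have e3 : (∑ t ∈ range m, ((t : ℤ)+1) * Y i (t + 1))
      = ∑ t ∈ range (m+1), (t : ℤ) * Y i t := by
    rw [Finset.sum_range_succ' (fun t => (t : ℤ) * Y i t) m]
    push_cast
    simp
  have e4 : (∑ t ∈ range m, ((t : ℤ)+2) * Y i t)
      = (∑ t ∈ range (m+1), ((t : ℤ)+2) * Y i t) - ((m:ℤ)+2) * Y i m := by
    rw [Finset.sum_range_succ]
    ring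
  rw [e1, e2, e3, e4]
  have e5 : (∑ t ∈ range (m+1), ((t : ℤ)+1) * (2 * Y i t))
      - (a + ((∑ t ∈ range (m+1), ((t : ℤ)+2) * Y i t) - ((m:ℤ)+2) * Y i m))
      - (((m:ℤ)+1) * b + ∑ t ∈ range (m+1), (t : ℤ) * Y i t)
      = (∑ t ∈ range (m+1), (((t : ℤ)+1) * (2 * Y i t) - ((t : ℤ)+2) * Y i t - (t : ℤ) * Y i t))
        + ((m:ℤ)+2) * Y i m - a - ((m:ℤ)+1) * b := by
    rw [sum_sub_distrib, sum_sub_distrib]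
    ring
  rw [e5]
  have e6 : (∑ t ∈ range (m+1), (((t : ℤ)+1) * (2 * Y i t) - ((t : ℤ)+2) * Y i t - (t : ℤ) * Y i t)) = 0 :=
    sum_eq_zero fun t _ => by ring
  rw [e6]
  ring

lemma psi_lap (x : V2 m n' → ℤ) :
    psi m n' ((Hinge (m+3) (n'+2)).lapMatrix ℤ *ᵥ x) = 0 := by
  obtain ⟨a, b, Y, rfl⟩ : ∃ a b Y, x = hf m n' a b Y :=
    ⟨_, _, _, hf_eta m n' x⟩
  have hzmod : (m : ZMod (m+2)) + 2 = 0 := by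
    have := ZMod.natCast_self (m+2)
    push_cast at this
    exact this
  apply Prod.ext
  · funext c
    show ((Acyc m n' _ c.succ.succ - Acyc m n' _ 1 : ℤ) : ZMod (m+2)) = 0
    rw [ALap, ALap]
    rw [show ((m:ℤ)+2) * Y c.succ.succ m - a - ((m:ℤ)+1) * b
        - (((m:ℤ)+2) * Y 1 m - a - ((m:ℤ)+1) * b)
        = ((m:ℤ)+2) * (Y c.succ.succ m - Y 1 m) from by ring]
    push_cast
    rw [hzmod]
    ring
  · show ((bigI m n' _ : ℤ) : ZMod ((m+2)*(m+n'+4))) = 0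
    have hb : bigI m n' ((Hinge (m+3) (n'+2)).lapMatrix ℤ *ᵥ hf m n' a b Y)
        = (((m:ℤ)+2) * ((m:ℤ)+(n':ℤ)+4)) * (b - Y 1 m) := by
      have hAsum : (∑ i, Acyc m n' ((Hinge (m+3) (n'+2)).lapMatrix ℤ *ᵥ hf m n' a b Y) i)
          = ((m:ℤ)+2) * (∑ i, Y i m) - ((n':ℤ)+2) * a - ((n':ℤ)+2)*((m:ℤ)+1)*b := by
        rw [sum_congr rfl fun i _ => ALap m n' a b Y i]
        rw [sum_sub_distrib, sum_sub_distrib, ← Finset.mul_sum]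
        simp only [sum_const, card_univ, Fintype.card_fin, nsmul_eq_mul]
        push_cast; ring
      unfold bigI
      rw [hAsum, lap_w, ALap]
      rw [sum_sub_distrib]
      simp only [sum_const, card_univ, Fintype.card_fin, nsmul_eq_mul]
      push_cast
      ring
    rw [hb]
    push_cast
    rw [show (((m : ZMod ((m+2)*(m+n'+4))) + 2) * (((m:ZMod ((m+2)*(m+n'+4)))) + (n':ZMod ((m+2)*(m+n'+4))) + 4)) = ((((m+2)*(m+n'+4) : ℕ)) : ZMod ((m+2)*(m+n'+4))) from by push_cast; ring]
    rw [ZMod.natCast_self]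
    ring

def Gf (f : Fin n' → ZMod (m+2)) (x : ZMod ((m+2)*(m+n'+4))) : Fin (n'+2) → ℤ :=
  fun i => if i.val = 0 then (x.val : ℤ) - ∑ c : Fin n', ((f c).val : ℤ)
    else if h : 2 ≤ i.val then (((f ⟨i.val - 2, by have := i.isLt; omega⟩).val : ℤ)) else 0

def Dsur (f : Fin n' → ZMod (m+2)) (x : ZMod ((m+2)*(m+n'+4))) : V2 m n' → ℤ
  | Sum.inl p => if p.val = 0 then -(∑ i, Gf m n' f x i) else 0
  | Sum.inr q => if q.2.val = 0 then Gf m n' f x q.1 else 0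

variable (f : Fin n' → ZMod (m+2)) (x : ZMod ((m+2)*(m+n'+4)))

lemma Gf_zero : Gf m n' f x 0 = (x.val : ℤ) - ∑ c : Fin n', ((f c).val : ℤ) := by
  unfold Gf
  simp

lemma Gf_one_val (i : Fin (n'+2)) (hi : i.val = 1) : Gf m n' f x i = 0 := by
  unfold Gf
  rw [if_neg (by omega), dif_neg (by omega)]

lemma Gf_ss (c : Fin n') : Gf m n' f x c.succ.succ = ((f c).val : ℤ) := by
  unfold Gf
  have hv : (c.succ.succ : Fin (n'+2)).val = c.val + 2 := by
    simp [Fin.val_succ]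
  rw [if_neg (by omega), dif_pos (by omega)]
  simp [hv]

lemma Gf_sum : ∑ i, Gf m n' f x i = (x.val : ℤ) := by
  rw [Fin.sum_univ_succ, Fin.sum_univ_succ]
  rw [Gf_zero, Gf_one_val m n' f x _ (by simp [Fin.val_succ])]
  rw [sum_congr rfl (fun c _ => Gf_ss m n' f x c)]
  ring

lemma Acyc_Dsur (i : Fin (n'+2)) : Acyc m n' (Dsur m n' f x) i = Gf m n' f x i := by
  unfold Acyc
  have hterm : ∀ t ∈ range (m+1), ((t:ℤ)+1) * Dv m n' (Dsur m n' f x) i t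
      = if t = 0 then Gf m n' f x i else 0 := by
    intro t ht
    rw [mem_range] at ht
    rw [Dv, dif_pos ht]
    show ((t:ℤ)+1) * (if (⟨t, ht⟩ : Fin (m+1)).val = 0 then Gf m n' f x i else 0) = _
    by_cases h0 : t = 0
    · subst h0; simp
    · simp [h0]
  rw [sum_congr rfl hterm, Finset.sum_ite_eq' (range (m+1)) 0 (fun _ => Gf m n' f x i)]
  simp

lemma Dsur_w : Dsur m n' f x (Sum.inl 1) = 0 := by
  show (if (1 : Fin 2).val = 0 then -(∑ i, Gf m n' f x i) else 0) = 0
  norm_num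

lemma Dsur_deg : ∑ v, Dsur m n' f x v = 0 := by
  rw [Fintype.sum_sum_type, Fin.sum_univ_two, Fintype.sum_prod_type]
  have h0 : Dsur m n' f x (Sum.inl 0) = -(∑ i, Gf m n' f x i) := by
    show (if (0 : Fin 2).val = 0 then -(∑ i, Gf m n' f x i) else 0) = _
    norm_num
  have hin : ∀ i : Fin (n'+2), (∑ j : Fin (m+1), Dsur m n' f x (Sum.inr (i, j)))
      = Gf m n' f x i := by
    intro i
    have : ∀ j : Fin (m+1), Dsur m n' f x (Sum.inr (i, j))
        = if (j : ℕ) = 0 then Gf m n' f x i else 0 := fun j => rfl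
    rw [sum_congr rfl fun j _ => this j,
      Fin.sum_univ_eq_sum_range (fun t => if t = 0 then Gf m n' f x i else 0),
      Finset.sum_ite_eq' (range (m+1)) 0 (fun _ => Gf m n' f x i)]
    simp
  rw [h0, Dsur_w]
  rw [show (∑ x_1 : Fin (n'+2), ∑ y : Fin ((m+3)-2), Dsur m n' f x (Sum.inr (x_1, y)))
      = ∑ i : Fin (n'+2), Gf m n' f x i from sum_congr rfl fun i _ => hin i]
  ring

lemma psi_Dsur : psi m n' (Dsur m n' f x) = (f, x) := by
  haveI : NeZero ((m+2)*(m+n'+4)) := ⟨by positivity⟩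
  apply Prod.ext
  · funext c
    show ((Acyc m n' (Dsur m n' f x) c.succ.succ - Acyc m n' (Dsur m n' f x) 1 : ℤ)
        : ZMod (m+2)) = f c
    rw [Acyc_Dsur, Acyc_Dsur, Gf_ss, Gf_one_val m n' f x 1 (by simp)]
    push_cast
    rw [ZMod.natCast_val, ZMod.cast_id]
    ring
  · show ((bigI m n' (Dsur m n' f x) : ℤ) : ZMod ((m+2)*(m+n'+4))) = x
    unfold bigI
    rw [sum_congr rfl fun i _ => Acyc_Dsur m n' f x i, Gf_sum, Dsur_w,
      Acyc_Dsur, Gf_one_val m n' f x 1 (by simp)]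
    push_cast
    rw [ZMod.natCast_val, ZMod.cast_id]
    ring

lemma solve (D : V2 m n' → ℤ) (hdeg : ∑ v, D v = 0)
    (hsml : ∀ c : Fin n', ((m:ℤ)+2) ∣ (Acyc m n' D c.succ.succ - Acyc m n' D 1))
    (hbig : (((m:ℤ)+2) * ((m:ℤ)+(n':ℤ)+4)) ∣ bigI m n' D) :
    ∃ x, (Hinge (m+3) (n'+2)).lapMatrix ℤ *ᵥ x = D := by
  obtain ⟨q, hq⟩ := hbig
  have hq' : (∑ i, Acyc m n' D i) + ((m:ℤ)+2) * D (Sum.inl 1)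
      - ((m:ℤ)+(n':ℤ)+4) * Acyc m n' D 1
      = (((m:ℤ)+2) * ((m:ℤ)+(n':ℤ)+4)) * q := hq
  obtain ⟨S, hS⟩ : ∃ S, (∑ c : Fin n', (Acyc m n' D c.succ.succ - Acyc m n' D 1))
      = ((m:ℤ)+2) * S := Finset.dvd_sum fun c _ => hsml c
  have hS' : (∑ c : Fin n', Acyc m n' D c.succ.succ) - (n':ℤ) * Acyc m n' D 1
      = ((m:ℤ)+2) * S := by
    rw [sum_sub_distrib, sum_const, card_univ, Fintype.card_fin] at hS
    push_cast at hS
    linear_combination hS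
  have hAsum : (∑ i, Acyc m n' D i)
      = Acyc m n' D 0 + Acyc m n' D 1 + ∑ c : Fin n', Acyc m n' D c.succ.succ := by
    rw [Fin.sum_univ_succ (f := fun i => Acyc m n' D i), Fin.sum_univ_succ]
    rw [show ((0 : Fin (n'+1)).succ) = (1 : Fin (n'+2)) from
      Fin.ext (by simp [Fin.val_succ])]
    ring
  have hall : ∀ i : Fin (n'+2), ∃ r : ℤ,
      Acyc m n' D 1 - Acyc m n' D i = ((m:ℤ)+2) * r := by
    intro i
    by_cases h0 : i.val = 0
    · have hi : i = 0 := Fin.ext (by simp [h0])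
      rw [hi]
      refine ⟨-(Acyc m n' D 1) + S - ((m:ℤ)+(n':ℤ)+4)*q + D (Sum.inl 1), ?_⟩
      linear_combination hAsum - hq' + hS'
    · by_cases h1 : i.val = 1
      · have hi : i = 1 := Fin.ext (by rw [Fin.val_one]; omega)
        rw [hi]
        exact ⟨0, by ring⟩
      · have h2 : 2 ≤ i.val := by omega
        set c : Fin n' := ⟨i.val - 2, by have := i.isLt; omega⟩ with hc
        have hi : i = c.succ.succ := Fin.ext (by simp [Fin.val_succ, hc]; omega)
        obtain ⟨r, hrr⟩ := hsml c
        exact ⟨-r, by rw [hi]; linear_combination -hrr⟩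
  choose r hr using hall
  set δ : ℤ := Acyc m n' D 1 + ((m:ℤ)+2) * q with hδ
  set s : Fin (n'+2) → ℤ :=
    fun i => q + r i + ∑ t ∈ range (m+1), Dv m n' D i t with hs
  set Y : Fin (n'+2) → ℕ → ℤ :=
    fun i t => ((t:ℤ)+1) * s i - ∑ l ∈ range t, ((t:ℤ) - (l:ℤ)) * Dv m n' D i l with hY
  have hPδ : ((m:ℤ)+(n':ℤ)+4) * δ
      = (∑ i, Acyc m n' D i) + ((m:ℤ)+2) * D (Sum.inl 1) := by
    rw [hδ]
    linear_combination -hq'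
  have hδs : ∀ i, δ = ((m:ℤ)+2) * s i + Acyc m n' D i
      - ((m:ℤ)+2) * ∑ t ∈ range (m+1), Dv m n' D i t := by
    intro i
    have hri := hr i
    rw [hδ]
    simp only [hs]
    linear_combination hri
  have hone : ∀ i : Fin (n'+2), (∑ j : Fin (m+1), D (Sum.inr (i, j)))
      = ∑ t ∈ range (m+1), Dv m n' D i t := by
    intro i
    rw [show (∑ j : Fin (m+1), D (Sum.inr (i, j)))
        = ∑ j : Fin (m+1), Dv m n' D i (j : ℕ) from
      sum_congr rfl fun j _ => by rw [Dv, dif_pos j.isLt]; rfl]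
    exact Fin.sum_univ_eq_sum_range (fun t => Dv m n' D i t) (m+1)
  have hDdeg : D (Sum.inl 0) + D (Sum.inl 1)
      + (∑ i : Fin (n'+2), ∑ t ∈ range (m+1), Dv m n' D i t) = 0 := by
    rw [Fintype.sum_sum_type, Fin.sum_univ_two, Fintype.sum_prod_type] at hdeg
    rw [show (∑ x_1 : Fin (n'+2), ∑ y : Fin ((m+3)-2), D (Sum.inr (x_1, y)))
        = ∑ i : Fin (n'+2), ∑ t ∈ range (m+1), Dv m n' D i t from
      sum_congr rfl fun i _ => hone i] at hdeg
    linear_combination hdeg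
  have hssum : (∑ i, s i) = -δ
      + (∑ i : Fin (n'+2), ∑ t ∈ range (m+1), Dv m n' D i t) + D (Sum.inl 1) := by
    apply mul_left_cancel₀ (show ((m:ℤ)+2) ≠ 0 by positivity)
    have h1 : (∑ i, s i) = ((n':ℤ)+2) * q + (∑ i, r i)
        + ∑ i : Fin (n'+2), ∑ t ∈ range (m+1), Dv m n' D i t := by
      simp only [hs]
      rw [sum_add_distrib, sum_add_distrib, sum_const, card_univ, Fintype.card_fin]
      push_cast; ring
    have h2 : ((m:ℤ)+2) * (∑ i, r i)
        = ((n':ℤ)+2) * Acyc m n' D 1 - ∑ i, Acyc m n' D i := by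
      rw [Finset.mul_sum]
      rw [sum_congr rfl fun i _ => (hr i).symm]
      rw [sum_sub_distrib, sum_const, card_univ, Fintype.card_fin]
      push_cast; ring
    rw [h1]
    linear_combination h2 + hPδ - ((n':ℤ)+2) * hδ
  have hY0 : ∀ i, Y i 0 = s i := by
    intro i; simp [hY]
  have hYd : ∀ (i : Fin (n'+2)) (t : ℕ), Y i (t+1) - Y i t
      = s i - ∑ l ∈ range (t+1), Dv m n' D i l := by
    intro i t
    simp only [hY]
    push_cast
    rw [show (∑ l ∈ range (t+1), (((t:ℤ)+1) - (l:ℤ)) * Dv m n' D i l)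
        = (∑ l ∈ range (t+1), ((t:ℤ) - (l:ℤ)) * Dv m n' D i l)
          + ∑ l ∈ range (t+1), Dv m n' D i l from by
      rw [← sum_add_distrib]; exact sum_congr rfl fun l _ => by ring]
    rw [show (∑ l ∈ range (t+1), ((t:ℤ) - (l:ℤ)) * Dv m n' D i l)
        = ∑ l ∈ range t, ((t:ℤ) - (l:ℤ)) * Dv m n' D i l from by
      rw [sum_range_succ]; simp]
    ring
  have hYmδ : ∀ i, δ - Y i m = s i - ∑ t ∈ range (m+1), Dv m n' D i t := by
    intro i
    rw [hδs i]
    simp only [hY]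
    have e1 : (∑ l ∈ range m, ((m:ℤ) - (l:ℤ)) * Dv m n' D i l)
        = ∑ l ∈ range (m+1), ((m:ℤ) - (l:ℤ)) * Dv m n' D i l := by
      rw [sum_range_succ]; simp
    have e2 : Acyc m n' D i + (∑ l ∈ range (m+1), ((m:ℤ) - (l:ℤ)) * Dv m n' D i l)
        + (∑ t ∈ range (m+1), Dv m n' D i t)
        = ((m:ℤ)+2) * ∑ t ∈ range (m+1), Dv m n' D i t := by
      unfold Acyc
      rw [Finset.mul_sum, ← sum_add_distrib, ← sum_add_distrib]
      exact sum_congr rfl fun t _ => by ring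
    rw [e1]
    linear_combination e2
  clear_value δ s Y
  refine ⟨hf m n' 0 δ Y, ?_⟩
  funext v
  match v with
  | Sum.inl a =>
    by_cases ha : a = (0 : Fin 2)
    · rw [ha]
      refine (lap_u m n' 0 δ Y).trans ?_
      have hneg : (∑ i, ((0:ℤ) - Y i 0)) = -(∑ i, s i) := by
        rw [← Finset.sum_neg_distrib]
        exact sum_congr rfl fun i _ => by rw [hY0 i]; ring
      rw [hneg, hssum]
      linear_combination -hDdeg
    · have ha1 : a = (1 : Fin 2) := by
        apply Fin.ext
        have h2 := a.isLt
        have h0 : a.val ≠ 0 := fun h => ha (Fin.ext (by simpa using h))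
        have : (1 : Fin 2).val = 1 := rfl
        omega
      rw [ha1]
      refine (lap_w m n' 0 δ Y).trans ?_
      have h1 : (∑ i, (δ - Y i m)) = (∑ i, s i)
          - ∑ i : Fin (n'+2), ∑ t ∈ range (m+1), Dv m n' D i t := by
        rw [← sum_sub_distrib]
        exact sum_congr rfl fun i _ => hYmδ i
      rw [h1, hssum]
      ring
  | Sum.inr ⟨i, j⟩ =>
    refine (lap_v m n' 0 δ Y i j).trans ?_
    have hDij : D (Sum.inr (i, j)) = Dv m n' D i (j : ℕ) := by
      rw [Dv, dif_pos (show (j:ℕ) < m + 1 from j.isLt)]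
    rw [hDij]
    by_cases h0 : (j : ℕ) = 0 <;> by_cases hm : (j : ℕ) = m
    · rw [if_pos h0, if_pos hm, hm]
      have hm0 : m = 0 := by omega
      have h' := hYmδ i
      have hrm : range m = (∅ : Finset ℕ) := by rw [hm0]; rfl
      have hss : (∑ t ∈ range (m+1), Dv m n' D i t) = Dv m n' D i m := by
        rw [sum_range_succ, hrm, sum_empty, zero_add]
      have hY0m : Y i m = s i := by rw [hm0]; exact hY0 i
      linear_combination (-1 : ℤ) * h' + hY0m + hss
    · rw [if_pos h0, if_neg hm, h0]
      have hd := hYd i 0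
      simp only [zero_add, sum_range_one] at hd
      simp only [zero_add]
      linear_combination (-1 : ℤ) * hd + hY0 i
    · rw [if_neg h0, if_pos hm, hm]
      have h1m : m - 1 + 1 = m := by omega
      have hd := hYd i (m-1)
      rw [h1m] at hd
      have hss : (∑ t ∈ range (m+1), Dv m n' D i t)
          = (∑ t ∈ range m, Dv m n' D i t) + Dv m n' D i m :=
        sum_range_succ _ m
      linear_combination hd - hYmδ i + hss
    · rw [if_neg h0, if_neg hm]
      have h1 : (j : ℕ) - 1 + 1 = (j : ℕ) := by omega
      have hd1 := hYd i ((j : ℕ) - 1)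
      rw [h1] at hd1
      have hd2 := hYd i (j : ℕ)
      have hss : (∑ t ∈ range ((j : ℕ)+1), Dv m n' D i t)
          = (∑ t ∈ range (j : ℕ), Dv m n' D i t) + Dv m n' D i (j : ℕ) :=
        sum_range_succ _ _
      linear_combination hd1 - hd2 + hss

theorem main : Nonempty (CriticalGroup (Hinge (m+3) (n'+2)) ≃+
    (Fin n' → ZMod (m+2)) × ZMod ((m+2) * (m+n'+4))) := by
  classical
  set Ψ : (Div0 (V2 m n') : AddSubgroup _) →+
      (Fin n' → ZMod (m+2)) × ZMod ((m+2) * (m+n'+4)) :=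
    (psi m n').comp (Div0 (V2 m n')).subtype with hΨ
  have hsurj : Function.Surjective Ψ := by
    rintro ⟨f, x⟩
    refine ⟨⟨Dsur m n' f x, ?_⟩, ?_⟩
    · show Dsur m n' f x ∈ Div0 (V2 m n')
      exact (AddMonoidHom.mem_ker).mpr (Dsur_deg m n' f x)
    · show psi m n' (Dsur m n' f x) = (f, x)
      exact psi_Dsur m n' f x
  have hker : Ψ.ker = (Prin (Hinge (m+3) (n'+2))).addSubgroupOf (Div0 (V2 m n')) := by
    ext ⟨D, hD⟩
    simp only [AddMonoidHom.mem_ker, AddSubgroup.mem_addSubgroupOf]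
    constructor
    · intro h
      have hD0 : ∑ v, D v = 0 := (AddMonoidHom.mem_ker).mp hD
      have h1 : (psi m n' D).1 = 0 := by
        rw [show psi m n' D = Ψ ⟨D, hD⟩ from rfl, h]; rfl
      have h2 : (psi m n' D).2 = 0 := by
        rw [show psi m n' D = Ψ ⟨D, hD⟩ from rfl, h]; rfl
      have hsml : ∀ c : Fin n',
          ((m:ℤ)+2) ∣ (Acyc m n' D c.succ.succ - Acyc m n' D 1) := by
        intro c
        have hc := congrFun h1 c
        have hc' : ((Acyc m n' D c.succ.succ - Acyc m n' D 1 : ℤ) : ZMod (m+2)) = 0 := hc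
        have := (ZMod.intCast_zmod_eq_zero_iff_dvd _ (m+2)).mp hc'
        push_cast at this
        exact this
      have hbig : (((m:ℤ)+2) * ((m:ℤ)+(n':ℤ)+4)) ∣ bigI m n' D := by
        have hb' : ((bigI m n' D : ℤ) : ZMod ((m+2)*(m+n'+4))) = 0 := h2
        have := (ZMod.intCast_zmod_eq_zero_iff_dvd _ ((m+2)*(m+n'+4))).mp hb'
        push_cast at this
        exact this
      obtain ⟨x, hx⟩ := solve m n' D hD0 hsml hbig
      exact ⟨x, hx⟩
    · rintro ⟨x, hx⟩
      have hx' : (Hinge (m+3) (n'+2)).lapMatrix ℤ *ᵥ x = D := hx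
      show psi m n' D = 0
      rw [← hx']
      exact psi_lap m n' x
  exact ⟨(QuotientAddGroup.quotientAddEquivOfEq hker.symm).trans
    (QuotientAddGroup.quotientKerEquivOfSurjective Ψ hsurj)⟩

end HingeAux

/-- For all integers `k ≥ 3` and `n ≥ 2`, the critical group `K(H_{k,n})` is
isomorphic as an abelian group to `(ℤ/(k-1)ℤ)^(n-2) ⊕ ℤ/((k-1)(k+n-1))ℤ`. -/
theorem hinge_criticalGroup_structure (k n : ℕ) (hk : 3 ≤ k) (hn : 2 ≤ n) :
    Nonempty (CriticalGroup (Hinge k n) ≃+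
      (Fin (n - 2) → ZMod (k - 1)) × ZMod ((k - 1) * (k + n - 1))) := by
  obtain ⟨m, rfl⟩ : ∃ m, k = m + 3 := ⟨k - 3, by omega⟩
  obtain ⟨p, rfl⟩ : ∃ p, n = p + 2 := ⟨n - 2, by omega⟩
  rw [show (m+3) + (p+2) - 1 = m + p + 4 from by omega]
  exact HingeAux.main m p
end
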